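/- arXiv:1501.07385 — 5 statements merged into one kernel-verified Lean document; each statement's English description precedes it below -/
import Mathlib

section
/- (Injectivity of the Radon transform on Schwartz functions) Let N ≥ 2 and let f : ℝ^N → ℝ be a Schwartz function such that Rf(X,ξ) = 0 for every X ∈ ℝ and every unit vector ξ ∈ ℝ^N. Then f = 0 identically. -/
open MeasureTheory Metric Module Submodule
open scoped RealInnerProductSpace FourierTransform

noncomputable def radonTransform {N : ℕ} (f : EuclideanSpace ℝ (Fin N) → ℝ)
    (X : ℝ) (ξ : EuclideanSpace ℝ (Fin N)) : ℝ :=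
  ∫ y : ((ℝ ∙ ξ)ᗮ : Submodule ℝ (EuclideanSpace ℝ (Fin N))),
    f (X • ξ + (y : EuclideanSpace ℝ (Fin N)))

noncomputable def sphereMeasure (N : ℕ) :
    Measure (sphere (0 : EuclideanSpace ℝ (Fin N)) 1) :=
  ((volume : Measure (EuclideanSpace ℝ (Fin N))).toSphere Set.univ)⁻¹ •
    (volume : Measure (EuclideanSpace ℝ (Fin N))).toSphere

noncomputable def backProjection {N : ℕ}
    (g : ℝ → EuclideanSpace ℝ (Fin N) → ℝ) (x : EuclideanSpace ℝ (Fin N)) : ℝ :=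
  ∫ ξ : sphere (0 : EuclideanSpace ℝ (Fin N)) 1,
    g ⟪(ξ : EuclideanSpace ℝ (Fin N)), x⟫ (ξ : EuclideanSpace ℝ (Fin N)) ∂(sphereMeasure N)



variable {N : ℕ}

noncomputable def radonL (ξ : EuclideanSpace ℝ (Fin N)) :
    (ℝ × ((ℝ ∙ ξ)ᗮ : Submodule ℝ (EuclideanSpace ℝ (Fin N)))) →ₗ[ℝ] EuclideanSpace ℝ (Fin N) :=
  (LinearMap.toSpanSingleton ℝ _ ξ).coprod ((ℝ ∙ ξ)ᗮ).subtype

lemma radonL_apply (ξ : EuclideanSpace ℝ (Fin N)) (s : ℝ)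
    (y : ((ℝ ∙ ξ)ᗮ : Submodule ℝ (EuclideanSpace ℝ (Fin N)))) :
    radonL ξ (s, y) = s • ξ + (y : EuclideanSpace ℝ (Fin N)) := by
  simp [radonL, LinearMap.toSpanSingleton_apply]

lemma inner_eq_zero_of_mem (ξ : EuclideanSpace ℝ (Fin N))
    {y : EuclideanSpace ℝ (Fin N)} (hy : y ∈ (ℝ ∙ ξ)ᗮ) : ⟪ξ, y⟫ = 0 :=
  hy ξ (mem_span_singleton_self ξ)

lemma radonL_bijective (ξ : EuclideanSpace ℝ (Fin N)) (hξ : ‖ξ‖ = 1) :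
    Function.Bijective (radonL ξ) := by
  have hξξ : ⟪ξ, ξ⟫ = 1 := by
    rw [real_inner_self_eq_norm_sq, hξ]; norm_num
  constructor
  · rw [← LinearMap.ker_eq_bot, LinearMap.ker_eq_bot']
    rintro ⟨s, y⟩ hsy
    rw [radonL_apply] at hsy
    have h1 : ⟪ξ, s • ξ + (y : EuclideanSpace ℝ (Fin N))⟫ = 0 := by rw [hsy, inner_zero_right]
    rw [inner_add_right, real_inner_smul_right, hξξ, inner_eq_zero_of_mem ξ y.2] at h1
    have hs : s = 0 := by linarith
    have hy : (y : EuclideanSpace ℝ (Fin N)) = 0 := by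
      have := hsy
      rw [hs, zero_smul, zero_add] at this
      exact this
    simp [Prod.ext_iff, hs, ← Submodule.coe_eq_zero, hy]
  · intro x
    refine ⟨(⟪ξ, x⟫, ⟨x - ⟪ξ, x⟫ • ξ, ?_⟩), ?_⟩
    · intro u hu
      obtain ⟨c, rfl⟩ := mem_span_singleton.1 hu
      rw [real_inner_smul_left, inner_sub_right, real_inner_smul_right, hξξ]
      ring
    · rw [radonL_apply]
      simp

noncomputable def radonE (ξ : EuclideanSpace ℝ (Fin N)) (hξ : ‖ξ‖ = 1) :
    (ℝ × ((ℝ ∙ ξ)ᗮ : Submodule ℝ (EuclideanSpace ℝ (Fin N)))) ≃L[ℝ] EuclideanSpace ℝ (Fin N) :=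
  (LinearEquiv.ofBijective (radonL ξ) (radonL_bijective ξ hξ)).toContinuousLinearEquiv

lemma radonE_apply (ξ : EuclideanSpace ℝ (Fin N)) (hξ : ‖ξ‖ = 1) (s : ℝ)
    (y : ((ℝ ∙ ξ)ᗮ : Submodule ℝ (EuclideanSpace ℝ (Fin N)))) :
    radonE ξ hξ (s, y) = s • ξ + (y : EuclideanSpace ℝ (Fin N)) := radonL_apply ξ s y

lemma radonE_mp (ξ : EuclideanSpace ℝ (Fin N)) (hξ : ‖ξ‖ = 1) :
    MeasurePreserving (radonE ξ hξ)
      ((volume : Measure ℝ).prod (volume : Measure ((ℝ ∙ ξ)ᗮ : Submodule ℝ (EuclideanSpace ℝ (Fin N)))))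
      (volume : Measure (EuclideanSpace ℝ (Fin N))) := by
  have hξξ : ⟪ξ, ξ⟫ = 1 := by
    rw [real_inner_self_eq_norm_sq, hξ]; norm_num
  set F := ((ℝ ∙ ξ)ᗮ : Submodule ℝ (EuclideanSpace ℝ (Fin N))) with hF
  let bR : Basis (Fin 1) ℝ ℝ := Basis.singleton (Fin 1) ℝ
  have hbRo : Orthonormal ℝ bR := by
    rw [orthonormal_iff_ite]
    intro i j
    simp [bR, Subsingleton.elim i j, real_inner_self_eq_norm_sq]
  let bF := stdOrthonormalBasis ℝ F
  let b : Basis (Fin 1 ⊕ Fin (finrank ℝ F)) ℝ (ℝ × F) := bR.prod bF.toBasis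
  have h1 : (volume : Measure ℝ).prod (volume : Measure F) = b.addHaar := by
    rw [show b.addHaar = (bR.prod bF.toBasis).addHaar from rfl, Basis.prod_addHaar]
    have e1 : bR.addHaar = volume := by
      have := (bR.toOrthonormalBasis hbRo).addHaar_eq_volume
      rwa [Basis.toBasis_toOrthonormalBasis] at this
    rw [e1, bF.addHaar_eq_volume]
  refine ⟨(radonE ξ hξ).continuous.measurable, ?_⟩
  rw [h1, Basis.map_addHaar b (radonE ξ hξ)]
  have horth : Orthonormal ℝ (b.map (radonE ξ hξ).toLinearEquiv) := by
    rw [orthonormal_iff_ite]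
    have hbF := orthonormal_iff_ite.1 bF.orthonormal
    have he1 : ∀ i : Fin 1, (b.map (radonE ξ hξ).toLinearEquiv) (Sum.inl i) = ξ := by
      intro i
      rw [Basis.map_apply]
      have : b (Sum.inl i) = ((1 : ℝ), (0 : F)) := by
        simp [b, Basis.prod_apply, bR]
      rw [this]
      show radonE ξ hξ (1, 0) = ξ
      rw [radonE_apply]
      simp
    have he2 : ∀ j : Fin (finrank ℝ F),
        (b.map (radonE ξ hξ).toLinearEquiv) (Sum.inr j) = (bF j : EuclideanSpace ℝ (Fin N)) := by
      intro j
      rw [Basis.map_apply]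
      have : b (Sum.inr j) = ((0 : ℝ), bF j) := by
        simp [b, Basis.prod_apply]
      rw [this]
      show radonE ξ hξ (0, bF j) = _
      rw [radonE_apply]
      simp
    rintro (i | i) (j | j)
    · rw [he1, he1, hξξ]
      simp [Subsingleton.elim i j]
    · rw [he1, he2, inner_eq_zero_of_mem ξ (bF j).2]
      simp
    · rw [he1, he2, real_inner_comm, inner_eq_zero_of_mem ξ (bF i).2]
      simp
    · rw [he2, he2, ← Submodule.coe_inner, hbF i j]
      simp
  have := ((b.map (radonE ξ hξ).toLinearEquiv).toOrthonormalBasis horth).addHaar_eq_volume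
  rwa [Basis.toBasis_toOrthonormalBasis] at this

lemma radonE_apply' {N : ℕ} (ξ : EuclideanSpace ℝ (Fin N)) (hξ : ‖ξ‖ = 1)
    (p : ℝ × ((ℝ ∙ ξ)ᗮ : Submodule ℝ (EuclideanSpace ℝ (Fin N)))) :
    radonE ξ hξ p = p.1 • ξ + (p.2 : EuclideanSpace ℝ (Fin N)) := radonL_apply ξ p.1 p.2

lemma fourier_slice (f : SchwartzMap (EuclideanSpace ℝ (Fin N)) ℝ)
    (ξ : EuclideanSpace ℝ (Fin N)) (hξ : ‖ξ‖ = 1) (t : ℝ)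
    (h : ∀ X, radonTransform (fun y => f y) X ξ = 0) :
    𝓕 (fun x => (f x : ℂ)) (t • ξ) = 0 := by
  have hξξ : ⟪ξ, ξ⟫ = 1 := by
    rw [real_inner_self_eq_norm_sq, hξ]; norm_num
  set F := ((ℝ ∙ ξ)ᗮ : Submodule ℝ (EuclideanSpace ℝ (Fin N))) with hF
  set e := radonE ξ hξ with he
  have emb : MeasurableEmbedding e := e.toHomeomorph.measurableEmbedding
  have hinner : ∀ p : ℝ × F, ⟪e p, t • ξ⟫ = p.1 * t := by
    intro p
    rw [radonE_apply' ξ hξ p, inner_add_left, real_inner_smul_left, real_inner_smul_right,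
      real_inner_smul_right, hξξ, real_inner_comm, inner_eq_zero_of_mem ξ p.2.2]
    ring
  have hint0 : Integrable (fun p : ℝ × F => (f (e p) : ℂ)) ((volume : Measure ℝ).prod volume) :=
    ((radonE_mp ξ hξ).integrable_comp_emb emb).2 f.integrable.ofReal
  have hint : Integrable (fun p : ℝ × F => ((Real.fourierChar (-(p.1 * t)) : Circle) : ℂ) * (f (e p) : ℂ))
      ((volume : Measure ℝ).prod volume) := by
    apply hint0.bdd_mul (c := 1) (f := fun p : ℝ × F => ((Real.fourierChar (-(p.1 * t)) : Circle) : ℂ))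
    · apply Continuous.aestronglyMeasurable
      exact continuous_subtype_val.comp (Real.continuous_fourierChar.comp
        ((continuous_fst.mul continuous_const).neg))
    · exact Filter.Eventually.of_forall fun p => (Circle.norm_coe _).le
  rw [Real.fourier_eq, ← (radonE_mp ξ hξ).integral_comp emb]
  have : ∀ p : ℝ × F, (Real.fourierChar (-⟪e p, t • ξ⟫) : Circle) • (f (e p) : ℂ)
      = ((Real.fourierChar (-(p.1 * t)) : Circle) : ℂ) * (f (e p) : ℂ) := by
    intro p
    rw [hinner p, Circle.smul_def, smul_eq_mul]
  rw [integral_congr_ae (Filter.Eventually.of_forall this), integral_prod _ hint]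
  have inner_int : ∀ s : ℝ, (∫ y : F, ((Real.fourierChar (-(s * t)) : Circle) : ℂ) *
      (f (e (s, y)) : ℂ)) = 0 := by
    intro s
    rw [integral_const_mul]
    have hc : ∀ y : F, (f (e (s, y)) : ℂ) = ((f (s • ξ + (y : EuclideanSpace ℝ (Fin N))) : ℝ) : ℂ) := by
      intro y; rw [radonE_apply' ξ hξ (s, y)]
    have hIR : (∫ y : F, ((f (s • ξ + (y : EuclideanSpace ℝ (Fin N))) : ℝ) : ℂ))
        = ((∫ y : F, f (s • ξ + (y : EuclideanSpace ℝ (Fin N))) : ℝ) : ℂ) := integral_ofReal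
    rw [integral_congr_ae (Filter.Eventually.of_forall hc), hIR]
    have h0 : (∫ y : F, f (s • ξ + (y : EuclideanSpace ℝ (Fin N)))) = 0 := h s
    rw [h0]
    simp
  simp only [inner_int, integral_zero]

theorem radon_injective_on_schwartz (N : ℕ) (hN : 2 ≤ N)
    (f : SchwartzMap (EuclideanSpace ℝ (Fin N)) ℝ)
    (h : ∀ (X : ℝ) (ξ : EuclideanSpace ℝ (Fin N)), ‖ξ‖ = 1 →
      radonTransform (fun y => f y) X ξ = 0) :
    ∀ x : EuclideanSpace ℝ (Fin N), f x = 0 := by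
  intro x
  have key : ∀ v : EuclideanSpace ℝ (Fin N), 𝓕 (fun x => (f x : ℂ)) v = 0 := by
    intro v
    rcases eq_or_ne v 0 with rfl | hv
    · set ξ : EuclideanSpace ℝ (Fin N) := EuclideanSpace.single (⟨0, by omega⟩ : Fin N) (1 : ℝ)
      have hξ : ‖ξ‖ = 1 := by simp [ξ, EuclideanSpace.norm_single]
      have := fourier_slice f ξ hξ 0 (fun X => h X ξ hξ)
      simpa using this
    · set ξ : EuclideanSpace ℝ (Fin N) := ‖v‖⁻¹ • v with hξdef
      have hξ : ‖ξ‖ = 1 := norm_smul_inv_norm hv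
      have := fourier_slice f ξ hξ ‖v‖ (fun X => h X ξ hξ)
      rwa [hξdef, smul_smul, mul_inv_cancel₀ (norm_ne_zero_iff.2 hv), one_smul] at this
  have hcont : Continuous fun x : EuclideanSpace ℝ (Fin N) => (f x : ℂ) :=
    Complex.continuous_ofReal.comp f.continuous
  have hint : Integrable (fun x : EuclideanSpace ℝ (Fin N) => (f x : ℂ)) := f.integrable.ofReal
  have h2 : 𝓕 (fun x : EuclideanSpace ℝ (Fin N) => (f x : ℂ)) = fun _ => 0 := funext key
  have hinv := hcont.fourierInv_fourier_eq hint (by rw [h2]; exact integrable_zero _ _ _)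
  have hx : (f x : ℂ) = 0 := by
    rw [← congrFun hinv x, h2]
    simp [Real.fourierInv_eq]
  exact_mod_cast hx
end

section
/- (Helgason moment conditions) Let N ≥ 2, let f : ℝ^N → ℝ be a Schwartz function, and let k ≥ 0 be an integer. Define Q : ℝ^N → ℝ by Q(ξ) = ∫_{ℝ^N} ⟨ξ,x⟩^k f(x) dx. Then (i) for every unit vector ξ ∈ ℝ^N, ∫_ℝ X^k Rf(X,ξ) dX = Q(ξ), and (ii) Q is homogeneous of degree k, i.e. Q(tξ) = t^k Q(ξ) for all t ∈ ℝ and ξ ∈ ℝ^N; in particular ξ ↦ ∫_ℝ X^k Rf(X,ξ) dX is the restriction to the unit sphere of a homogeneous polynomial of degree k in ξ₁,…,ξ_N. -/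
open MeasureTheory Metric
open scoped RealInnerProductSpace

theorem helgason_moment_conditions (N : ℕ) (hN : 2 ≤ N)
    (f : SchwartzMap (EuclideanSpace ℝ (Fin N)) ℝ) (k : ℕ)
    (Q : EuclideanSpace ℝ (Fin N) → ℝ)
    (hQ : Q = fun ξ => ∫ x : EuclideanSpace ℝ (Fin N), (⟪ξ, x⟫ : ℝ) ^ k * f x) :
    (∀ ξ : EuclideanSpace ℝ (Fin N), ‖ξ‖ = 1 →
        ∫ X : ℝ, X ^ k * radonTransform (fun y => f y) X ξ = Q ξ) ∧
      (∀ (t : ℝ) (ξ : EuclideanSpace ℝ (Fin N)), Q (t • ξ) = t ^ k * Q ξ) := by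
  obtain ⟨m, rfl⟩ : ∃ m, N = m + 2 := ⟨N - 2, by omega⟩
  constructor
  · intro ξ hξ
    have hξ0 : ξ ≠ 0 := fun h => by simp [h] at hξ
    -- orthonormal basis with `b 0 = ξ`
    have hcard : Module.finrank ℝ (EuclideanSpace ℝ (Fin (m + 2)))
        = Fintype.card (Fin (m + 2)) := by
      simp [finrank_euclideanSpace]
    have horth : Orthonormal ℝ
        (({0} : Set (Fin (m + 2))).restrict (fun _ => ξ)) := by
      constructor
      · intro i; exact hξ
      · intro i j hij
        exact absurd (Subtype.ext (by
          have hi := i.2; have hj := j.2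
          simp only [Set.mem_singleton_iff] at hi hj
          rw [hi, hj])) hij
    obtain ⟨b, hb⟩ := horth.exists_orthonormalBasis_extension_of_card_eq hcard
    have hb0 : b 0 = ξ := hb 0 rfl
    -- the orthogonal complement and an orthonormal basis of it
    have hmemK : ∀ i : Fin (m + 1), b i.succ ∈ (ℝ ∙ ξ)ᗮ := by
      intro i
      rw [Submodule.mem_orthogonal_singleton_iff_inner_right, ← hb0]
      exact b.orthonormal.2 (Fin.succ_ne_zero i).symm
    set K := ((ℝ ∙ ξ)ᗮ : Submodule ℝ (EuclideanSpace ℝ (Fin (m + 2)))) with hK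
    let v : Fin (m + 1) → K := fun i => ⟨b i.succ, hmemK i⟩
    have hvon : Orthonormal ℝ v := by
      constructor
      · intro i; exact b.orthonormal.1 i.succ
      · intro i j hij
        have : ⟪b i.succ, b j.succ⟫ = (0 : ℝ) :=
          b.orthonormal.2 (fun h => hij (Fin.succ_injective _ h))
        simpa [v, Submodule.coe_inner] using this
    have hkfr : Fintype.card (Fin (m + 1)) = Module.finrank ℝ K := by
      have h1 : Module.finrank ℝ (ℝ ∙ ξ) = 1 := finrank_span_singleton hξ0
      have h2 := Submodule.finrank_add_finrank_orthogonal
        (K := (ℝ ∙ ξ : Submodule ℝ (EuclideanSpace ℝ (Fin (m + 2)))))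
      rw [h1, hcard] at h2
      rw [hK]
      simp only [Fintype.card_fin] at h2 ⊢
      omega
    let cb : Module.Basis (Fin (m + 1)) ℝ K := basisOfOrthonormalOfCardEqFinrank hvon hkfr
    have hcb : ⇑cb = v := coe_basisOfOrthonormalOfCardEqFinrank hvon hkfr
    let c : OrthonormalBasis (Fin (m + 1)) ℝ K :=
      cb.toOrthonormalBasis (by rwa [hcb])
    have hc : ∀ i, (c i : EuclideanSpace ℝ (Fin (m + 2))) = b i.succ := by
      intro i
      simp only [c, Module.Basis.coe_toOrthonormalBasis, hcb, v]
    -- key algebraic identity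
    have key : ∀ w : EuclideanSpace ℝ (Fin (m + 2)),
        b.repr.symm w = w 0 • ξ +
          ((c.repr.symm (WithLp.toLp 2 (fun j : Fin (m + 1) => w j.succ) : EuclideanSpace ℝ (Fin (m + 1))) : K)
            : EuclideanSpace ℝ (Fin (m + 2))) := by
      intro w
      rw [← b.sum_repr_symm, ← c.sum_repr_symm, Fin.sum_univ_succ, hb0]
      congr 1
      rw [Submodule.coe_sum]
      exact Finset.sum_congr rfl fun j _ => by rw [Submodule.coe_smul, hc]
    -- measure preserving equivalences
    let Ψ : (ℝ × (Fin (m + 1) → ℝ)) ≃ᵐ EuclideanSpace ℝ (Fin (m + 2)) :=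
      ((MeasurableEquiv.piFinSuccAbove (fun _ : Fin (m + 2) => ℝ) 0).symm.trans
        (MeasurableEquiv.toLp 2 (Fin (m + 2) → ℝ))).trans
        b.measurableEquiv.symm
    have hΨ : MeasurePreserving Ψ volume volume := by
      have h1 : MeasurePreserving
          (MeasurableEquiv.piFinSuccAbove (fun _ : Fin (m + 2) => ℝ) 0).symm
          volume volume :=
        (volume_preserving_piFinSuccAbove (fun _ : Fin (m + 2) => ℝ) 0).symm
      have h2 : MeasurePreserving
          (MeasurableEquiv.toLp 2 (Fin (m + 2) → ℝ)) volume volume :=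
        (EuclideanSpace.volume_preserving_symm_measurableEquiv_toLp (Fin (m + 2))).symm
      have h3 : MeasurePreserving b.measurableEquiv.symm volume volume :=
        b.measurePreserving_measurableEquiv.symm
      exact h3.comp (h2.comp h1)
    let θ : (Fin (m + 1) → ℝ) ≃ᵐ K :=
      (MeasurableEquiv.toLp 2 (Fin (m + 1) → ℝ)).trans
        c.measurableEquiv.symm
    have hθ : MeasurePreserving θ volume volume := by
      have h1 : MeasurePreserving
          (MeasurableEquiv.toLp 2 (Fin (m + 1) → ℝ)) volume volume :=
        (EuclideanSpace.volume_preserving_symm_measurableEquiv_toLp (Fin (m + 1))).symm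
      have h2 : MeasurePreserving c.measurableEquiv.symm volume volume :=
        c.measurePreserving_measurableEquiv.symm
      exact h2.comp h1
    -- description of Ψ
    have hΨeq : ∀ (X : ℝ) (y : Fin (m + 1) → ℝ),
        Ψ (X, y) = X • ξ + ((θ y : K) : EuclideanSpace ℝ (Fin (m + 2))) := by
      intro X y
      have h1 : Ψ (X, y) = b.repr.symm
          (WithLp.toLp 2 (Fin.insertNth 0 X y : Fin (m + 2) → ℝ) :
            EuclideanSpace ℝ (Fin (m + 2))) := rfl
      have h2 : (Fin.insertNth 0 X y : Fin (m + 2) → ℝ) = Fin.cons X y :=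
        Fin.insertNth_zero' X y
      rw [h1, h2, key]
      simp only [Fin.cons_zero, Fin.cons_succ]
      rfl
    -- inner product computation
    have hin : ∀ (X : ℝ) (z : K),
        ⟪ξ, X • ξ + (z : EuclideanSpace ℝ (Fin (m + 2)))⟫ = X := by
      intro X z
      have hz : ⟪ξ, (z : EuclideanSpace ℝ (Fin (m + 2)))⟫ = (0 : ℝ) :=
        Submodule.mem_orthogonal_singleton_iff_inner_right.1 z.2
      rw [inner_add_right, real_inner_smul_right, hz, real_inner_self_eq_norm_sq, hξ]
      ring
    -- integrability
    have hgint : Integrable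
        (fun x : EuclideanSpace ℝ (Fin (m + 2)) => (⟪ξ, x⟫ : ℝ) ^ k * f x) volume := by
      refine (f.integrable_pow_mul volume k).mono' ?_ ?_
      · exact (((innerSL ℝ ξ).continuous.pow k).mul f.continuous).aestronglyMeasurable
      · filter_upwards with x
        have h2 : |(⟪ξ, x⟫ : ℝ)| ≤ ‖x‖ := by
          simpa [hξ] using abs_real_inner_le_norm ξ x
        calc ‖(⟪ξ, x⟫ : ℝ) ^ k * f x‖ = |(⟪ξ, x⟫ : ℝ)| ^ k * ‖f x‖ := by
              rw [norm_mul, norm_pow]; rfl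
          _ ≤ ‖x‖ ^ k * ‖f x‖ :=
              mul_le_mul_of_nonneg_right
                (pow_le_pow_left₀ (abs_nonneg _) h2 k) (norm_nonneg _)
    -- Radon transform as an integral over `Fin (m+1) → ℝ`
    have hR : ∀ X : ℝ, radonTransform (fun y => f y) X ξ
        = ∫ y : Fin (m + 1) → ℝ,
            f (X • ξ + ((θ y : K) : EuclideanSpace ℝ (Fin (m + 2)))) := by
      intro X
      exact (hθ.integral_comp θ.measurableEmbedding
        (fun z : K => f (X • ξ + (z : EuclideanSpace ℝ (Fin (m + 2)))))).symm
    -- main computation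
    rw [hQ]
    simp only
    rw [← hΨ.integral_comp Ψ.measurableEmbedding
      (fun x => (⟪ξ, x⟫ : ℝ) ^ k * f x)]
    have hFint : Integrable
        (fun p : ℝ × (Fin (m + 1) → ℝ) => (⟪ξ, Ψ p⟫ : ℝ) ^ k * f (Ψ p))
        (volume.prod volume) := by
      rw [← MeasureTheory.Measure.volume_eq_prod]
      exact (hΨ.integrable_comp_emb Ψ.measurableEmbedding).2 hgint
    rw [MeasureTheory.Measure.volume_eq_prod, MeasureTheory.integral_prod _ hFint]
    refine (integral_congr_ae (Filter.Eventually.of_forall fun X => ?_)).symm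
    rw [hR X, ← integral_const_mul]
    refine integral_congr_ae (Filter.Eventually.of_forall fun y => ?_)
    show (⟪ξ, Ψ (X, y)⟫ : ℝ) ^ k * f (Ψ (X, y))
      = X ^ k * f (X • ξ + ((θ y : K) : EuclideanSpace ℝ (Fin (m + 2))))
    rw [hΨeq X y, hin X (θ y)]
  · intro t ξ
    rw [hQ]
    simp only [real_inner_smul_left, mul_pow]
    rw [← integral_const_mul]
    exact integral_congr_ae (Filter.Eventually.of_forall fun x => by ring)
end

section
/- (L² continuity of the Radon transform on functions supported in the unit ball) Let N ≥ 2. There exists a constant C_N > 0, depending only on N, such that for every continuous function f : ℝ^N → ℝ with support contained in the closed unit ball, ∫_{S^{N−1}} ∫_ℝ |Rf(X,ξ)|² dX dσ(ξ) ≤ C_N ∫_{ℝ^N} |f(x)|² dx, where σ is the rotation-invariant probability measure on S^{N−1}. -/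
open MeasureTheory Metric
open scoped RealInnerProductSpace
open Module

lemma cs_aux {n : ℕ} (g : EuclideanSpace ℝ (Fin n) → ℝ) (hg : Continuous g)
    (hsupp : Function.support g ⊆ closedBall 0 1) :
    (∫ w, g w) ^ 2 ≤
      (volume (closedBall (0 : EuclideanSpace ℝ (Fin n)) 1)).toReal * ∫ w, |g w| ^ 2 := by
  set s : Set (EuclideanSpace ℝ (Fin n)) := closedBall 0 1 with hs
  have hzero : ∀ x, x ∉ s → g x = 0 := fun x hx => by
    by_contra h; exact hx (hsupp h)
  have hcs : HasCompactSupport g := HasCompactSupport.intro (isCompact_closedBall 0 1) hzero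
  have hint2 : Integrable (fun w => |g w| ^ 2) := by
    apply Continuous.integrable_of_hasCompactSupport (by continuity)
    exact (hcs.comp_left (g := fun t : ℝ => |t| ^ 2) (by simp))
  haveI : IsFiniteMeasure (volume.restrict s) :=
    ⟨by rw [Measure.restrict_apply_univ]; exact (isCompact_closedBall _ _).measure_lt_top⟩
  have hmem : MemLp (fun w => |g w|) (ENNReal.ofReal 2) (volume.restrict s) := by
    rw [show ENNReal.ofReal 2 = 2 by simp]
    rw [memLp_two_iff_integrable_sq (hg.abs.aestronglyMeasurable.restrict)]
    exact (hint2.restrict (s := s)).congr (ae_of_all _ fun w => rfl)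
  have hconj : Real.HolderConjugate 2 2 := ⟨by norm_num, by norm_num, by norm_num⟩
  have hH := integral_mul_le_Lp_mul_Lq_of_nonneg (μ := volume.restrict s) hconj
      (f := fun w => |g w|) (g := fun _ => (1:ℝ)) (ae_of_all _ fun w => abs_nonneg _)
      (ae_of_all _ fun _ => zero_le_one) hmem (memLp_const 1)
  simp only [mul_one, Real.one_rpow] at hH
  have hrp : ∀ x : ℝ, x ^ (2:ℝ) = x ^ 2 := fun x => by
    rw [show (2:ℝ) = ((2:ℕ):ℝ) by norm_num, Real.rpow_natCast]
  rw [integral_congr_ae (ae_of_all _ fun w => hrp (|g w|))] at hH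
  have hconst : ∫ _ω in s, (1:ℝ) = (volume s).toReal := by
    simp [Measure.restrict_apply_univ, measureReal_def]
  rw [hconst] at hH
  have hA0 : 0 ≤ ∫ w in s, |g w| ^ 2 := integral_nonneg fun w => by positivity
  have hB0 : (0:ℝ) ≤ (volume s).toReal := ENNReal.toReal_nonneg
  have hsq : ((∫ w in s, |g w| ^ 2) ^ ((1:ℝ)/2) * ((volume s).toReal) ^ ((1:ℝ)/2)) ^ 2
      = (volume s).toReal * ∫ w in s, |g w| ^ 2 := by
    rw [mul_pow, ← Real.rpow_natCast ((∫ w in s, |g w| ^ 2) ^ ((1:ℝ)/2)) 2,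
      ← Real.rpow_natCast (((volume s).toReal) ^ ((1:ℝ)/2)) 2,
      ← Real.rpow_mul hA0, ← Real.rpow_mul hB0]
    norm_num [Real.rpow_one]; ring
  have h1 : ∫ w, g w = ∫ w in s, g w :=
    (setIntegral_eq_integral_of_forall_compl_eq_zero hzero).symm
  have hA : ∫ w in s, |g w| ^ 2 = ∫ w, |g w| ^ 2 :=
    setIntegral_eq_integral_of_forall_compl_eq_zero fun x hx => by rw [hzero x hx]; simp
  calc (∫ w, g w) ^ 2 = |∫ w in s, g w| ^ 2 := by rw [h1, sq_abs]
    _ ≤ (∫ w in s, |g w|) ^ 2 := by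
        apply pow_le_pow_left₀ (abs_nonneg _)
        simpa [Real.norm_eq_abs] using norm_integral_le_integral_norm (μ := volume.restrict s) g
    _ ≤ ((∫ w in s, |g w| ^ 2) ^ ((1:ℝ)/2) * ((volume s).toReal) ^ ((1:ℝ)/2)) ^ 2 := by
        apply pow_le_pow_left₀ (integral_nonneg fun w => abs_nonneg _) hH
    _ = (volume s).toReal * ∫ w in s, |g w| ^ 2 := hsq
    _ = (volume s).toReal * ∫ w, |g w| ^ 2 := by rw [hA]


set_option maxHeartbeats 2000000 in
lemma radon_key {n : ℕ} (ξ : EuclideanSpace ℝ (Fin (n+1))) (hξ : ‖ξ‖ = 1)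
    (f : EuclideanSpace ℝ (Fin (n+1)) → ℝ) (hf : Continuous f)
    (hsupp : Function.support f ⊆ closedBall 0 1) :
    ∫ X : ℝ, |radonTransform f X ξ| ^ 2 ≤
      (volume (closedBall (0 : EuclideanSpace ℝ (Fin n)) 1)).toReal * ∫ x, |f x| ^ 2 := by
  classical
  have hξ0 : ξ ≠ 0 := fun h => by simp [h] at hξ
  -- orthonormal basis with b 0 = ξ
  have hcard : finrank ℝ (EuclideanSpace ℝ (Fin (n+1))) = Fintype.card (Fin (n+1)) := by
    simp [finrank_euclideanSpace_fin]
  have horth : Orthonormal ℝ (({0} : Set (Fin (n+1))).restrict (fun _ => ξ)) := by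
    constructor
    · intro i; exact hξ
    · intro i j hij
      exact absurd (Subtype.ext ((Set.mem_singleton_iff.1 i.2).trans
        (Set.mem_singleton_iff.1 j.2).symm)) hij
  obtain ⟨b, hb⟩ := horth.exists_orthonormalBasis_extension_of_card_eq hcard
  have hb0 : b 0 = ξ := hb 0 rfl
  -- the orthogonal complement and its basis
  set K : Submodule ℝ (EuclideanSpace ℝ (Fin (n+1))) := (ℝ ∙ ξ)ᗮ with hK
  have hmemK : ∀ i : Fin n, b i.succ ∈ K := by
    intro i
    rw [hK, Submodule.mem_orthogonal_singleton_iff_inner_right, ← hb0]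
    exact b.orthonormal.2 (Fin.succ_ne_zero i).symm
  have hrankK : finrank ℝ K = n := by
    have h1 : finrank ℝ (ℝ ∙ ξ) = 1 := finrank_span_singleton hξ0
    have h2 := Submodule.finrank_add_finrank_orthogonal (K := (ℝ ∙ ξ))
    rw [h1, hcard] at h2
    simp only [Fintype.card_fin] at h2
    rw [hK]
    omega
  -- orthonormal basis of K
  set v : Fin n → K := fun i => ⟨b i.succ, hmemK i⟩ with hv
  have hvon : Orthonormal ℝ v := by
    rw [orthonormal_iff_ite]
    intro i j
    have := (orthonormal_iff_ite.1 b.orthonormal) i.succ j.succ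
    simp only [Fin.succ_inj] at this
    exact this
  have hspan : ⊤ ≤ Submodule.span ℝ (Set.range v) :=
    (hvon.linearIndependent.span_eq_top_of_card_eq_finrank' (by simp [hrankK])).ge
  set b' : OrthonormalBasis (Fin n) ℝ K := OrthonormalBasis.mk hvon hspan with hb'
  have hb'app : ∀ i, b' i = v i := fun i => by rw [hb', OrthonormalBasis.coe_mk]
  -- the measurable equivalence
  set Φe : (ℝ × EuclideanSpace ℝ (Fin n)) ≃ᵐ EuclideanSpace ℝ (Fin (n+1)) :=
    (MeasurableEquiv.prodCongr (MeasurableEquiv.refl ℝ)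
        ((MeasurableEquiv.toLp 2 (Fin n → ℝ)).symm)).trans
      (((MeasurableEquiv.piFinSuccAbove (fun _ : Fin (n+1) => ℝ) 0).symm).trans
        ((((MeasurableEquiv.toLp 2 (Fin (n+1) → ℝ)).symm).symm).trans
          b.measurableEquiv.symm)) with hΦe
  have mpΦ : MeasurePreserving Φe volume volume := by
    have h1 : MeasurePreserving
        (⇑(MeasurableEquiv.prodCongr (MeasurableEquiv.refl ℝ)
          ((MeasurableEquiv.toLp 2 (Fin n → ℝ)).symm)))
        (volume : Measure (ℝ × EuclideanSpace ℝ (Fin n)))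
        (volume : Measure (ℝ × (Fin n → ℝ))) := by
      rw [Measure.volume_eq_prod, Measure.volume_eq_prod]
      exact (MeasurePreserving.id volume).prod
        (EuclideanSpace.volume_preserving_symm_measurableEquiv_toLp (Fin n))
    have h2 := (volume_preserving_piFinSuccAbove (fun _ : Fin (n+1) => ℝ) 0).symm
    have h3 := (EuclideanSpace.volume_preserving_symm_measurableEquiv_toLp (Fin (n+1))).symm
    have h4 := b.measurePreserving_measurableEquiv.symm
    exact (((h4.comp h3).comp h2).comp h1 : _)
  have hΦapp : ∀ (t : ℝ) (w : EuclideanSpace ℝ (Fin n)),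
      Φe (t, w) = t • ξ + ((b'.repr.symm w : K) : EuclideanSpace ℝ (Fin (n+1))) := by
    intro t w
    have hins : Φe (t, w) = b.repr.symm
        ((WithLp.equiv 2 (Fin (n+1) → ℝ)).symm (Fin.insertNth (α := fun _ => ℝ) 0 t (fun j => w j))) := rfl
    rw [hins]
    have hsum1 : b.repr.symm
        ((WithLp.equiv 2 (Fin (n+1) → ℝ)).symm (Fin.insertNth (α := fun _ => ℝ) 0 t (fun j => w j)))
        = ∑ i : Fin (n+1), Fin.insertNth (α := fun _ => ℝ) 0 t (fun j => w j) i • b i := by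
      rw [← b.sum_repr_symm]
      rfl
    have hsum2 : ((b'.repr.symm w : K) : EuclideanSpace ℝ (Fin (n+1)))
        = ∑ i : Fin n, w i • b i.succ := by
      rw [← b'.sum_repr_symm]
      push_cast
      refine Finset.sum_congr rfl fun i _ => ?_
      rw [hb'app]
    rw [hsum1, hsum2, Fin.sum_univ_succ, Fin.insertNth_apply_same, hb0]
    congr 1
  -- the analytic part
  set Vc : EuclideanSpace ℝ (Fin n) → EuclideanSpace ℝ (Fin (n+1)) :=
    fun w => ((b'.repr.symm w : K) : EuclideanSpace ℝ (Fin (n+1))) with hVc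
  have hVcont : Continuous Vc := continuous_subtype_val.comp b'.repr.symm.continuous
  have hVnorm : ∀ w, ‖Vc w‖ = ‖w‖ := fun w => by
    rw [hVc]; rw [Submodule.norm_coe]; exact b'.repr.symm.norm_map w
  have hVinner : ∀ w, ⟪ξ, Vc w⟫ = 0 := fun w => by
    exact Submodule.mem_orthogonal_singleton_iff_inner_right.1 (b'.repr.symm w).2
  have hnorm : ∀ (t : ℝ) (w : EuclideanSpace ℝ (Fin n)),
      ‖t • ξ + Vc w‖ ^ 2 = t ^ 2 + ‖w‖ ^ 2 := by
    intro t w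
    rw [norm_add_sq_real, real_inner_smul_left, hVinner, norm_smul, hξ, hVnorm]
    simp [sq_abs]
  set F : ℝ × EuclideanSpace ℝ (Fin n) → ℝ := fun p => f (p.1 • ξ + Vc p.2) with hF
  have hFcont : Continuous F := by
    apply hf.comp
    exact ((continuous_fst.smul continuous_const).add (hVcont.comp continuous_snd))
  have hFsupp : ∀ p, F p ≠ 0 → |p.1| ≤ 1 ∧ ‖p.2‖ ≤ 1 := by
    intro p hp
    have hx : p.1 • ξ + Vc p.2 ∈ closedBall (0 : EuclideanSpace ℝ (Fin (n+1))) 1 := hsupp hp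
    rw [mem_closedBall_zero_iff] at hx
    have h2 : ‖p.1 • ξ + Vc p.2‖ ^ 2 ≤ 1 := by nlinarith [norm_nonneg (p.1 • ξ + Vc p.2)]
    rw [hnorm] at h2
    constructor
    · nlinarith [sq_abs p.1, abs_nonneg p.1, sq_nonneg ‖p.2‖]
    · nlinarith [norm_nonneg p.2, sq_nonneg p.1]
  have hFcs : HasCompactSupport F := by
    apply HasCompactSupport.intro
      ((isCompact_Icc (a := (-1:ℝ)) (b := 1)).prod
        (isCompact_closedBall (0 : EuclideanSpace ℝ (Fin n)) 1))
    intro p hp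
    by_contra h
    refine hp (Set.mk_mem_prod ?_ ?_)
    · have := (hFsupp p h).1
      rw [Set.mem_Icc]
      exact abs_le.1 this
    · rw [mem_closedBall_zero_iff]
      exact (hFsupp p h).2
  have hFint : Integrable F := hFcont.integrable_of_hasCompactSupport hFcs
  have hF2cs : HasCompactSupport (fun p => |F p| ^ 2) :=
    hFcs.comp_left (g := fun t : ℝ => |t| ^ 2) (by simp)
  have hF2int : Integrable (fun p => |F p| ^ 2) :=
    Continuous.integrable_of_hasCompactSupport (by continuity) hF2cs
  -- rewrite the radon transform
  have hrad : ∀ X : ℝ, radonTransform f X ξ = ∫ w, F (X, w) := by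
    intro X
    have h := (b'.measurePreserving_measurableEquiv.symm).integral_comp'
      (fun y : K => f (X • ξ + (y : EuclideanSpace ℝ (Fin (n+1)))))
    rw [radonTransform, ← h]
    rfl
  -- rewrite the right-hand side
  have hΦF : ∀ p : ℝ × EuclideanSpace ℝ (Fin n), f (Φe p) = F p := fun p => by
    obtain ⟨t, w⟩ := p
    rw [hΦapp]
  have hR : ∫ x, |f x| ^ 2 = ∫ X : ℝ, ∫ w, |F (X, w)| ^ 2 := by
    rw [← mpΦ.integral_comp' (fun x => |f x| ^ 2)]
    have : ∫ p : ℝ × EuclideanSpace ℝ (Fin n), |f (Φe p)| ^ 2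
        = ∫ p : ℝ × EuclideanSpace ℝ (Fin n), |F p| ^ 2 :=
      integral_congr_ae (ae_of_all _ fun p => by simp only [hΦF])
    rw [this]
    rw [Measure.volume_eq_prod] at hF2int ⊢
    exact integral_prod _ hF2int
  -- pointwise Cauchy-Schwarz in X
  set Bn : ℝ := (volume (closedBall (0 : EuclideanSpace ℝ (Fin n)) 1)).toReal with hBn
  have hXcs : ∀ X : ℝ, |radonTransform f X ξ| ^ 2 ≤ Bn * ∫ w, |F (X, w)| ^ 2 := by
    intro X
    have hgs : Function.support (fun w => F (X, w)) ⊆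
        closedBall (0 : EuclideanSpace ℝ (Fin n)) 1 := by
      intro w hw
      rw [mem_closedBall_zero_iff]
      exact (hFsupp (X, w) hw).2
    have := cs_aux (fun w => F (X, w)) (hFcont.comp (Continuous.prodMk_right X)) hgs
    rw [hrad X, sq_abs]
    exact this
  -- integrability of both sides in X
  rw [Measure.volume_eq_prod] at hFint hF2int
  have hmarg : Integrable (fun X : ℝ => ∫ w, |F (X, w)| ^ 2) volume :=
    hF2int.integral_prod_left
  have hradmeas : AEStronglyMeasurable (fun X : ℝ => ∫ w, F (X, w)) volume :=
    hFint.aestronglyMeasurable.integral_prod_right'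
  have hlhs_int : Integrable (fun X : ℝ => |radonTransform f X ξ| ^ 2) volume := by
    have heq : (fun X : ℝ => |radonTransform f X ξ| ^ 2)
        = fun X : ℝ => (∫ w, F (X, w)) * (∫ w, F (X, w)) :=
      funext fun X => by rw [hrad, sq_abs, sq]
    rw [heq]
    apply Integrable.mono' (hmarg.const_mul Bn)
    · exact hradmeas.mul hradmeas
    · refine ae_of_all _ fun X => ?_
      have := hXcs X
      rw [hrad X, sq_abs, sq] at this
      rwa [Real.norm_eq_abs, abs_of_nonneg (mul_self_nonneg _)]
  calc ∫ X : ℝ, |radonTransform f X ξ| ^ 2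
      ≤ ∫ X : ℝ, Bn * ∫ w, |F (X, w)| ^ 2 :=
        integral_mono hlhs_int (hmarg.const_mul Bn) hXcs
    _ = Bn * ∫ X : ℝ, ∫ w, |F (X, w)| ^ 2 := integral_const_mul Bn _
    _ = Bn * ∫ x, |f x| ^ 2 := by rw [hR]

theorem radon_L2_continuity_unit_ball (N : ℕ) (hN : 2 ≤ N) :
    ∃ C : ℝ, 0 < C ∧
      ∀ f : EuclideanSpace ℝ (Fin N) → ℝ, Continuous f →
        Function.support f ⊆ closedBall (0 : EuclideanSpace ℝ (Fin N)) 1 →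
        (∫ ξ : sphere (0 : EuclideanSpace ℝ (Fin N)) 1,
            (∫ X : ℝ, |radonTransform f X (ξ : EuclideanSpace ℝ (Fin N))| ^ 2)
              ∂(sphereMeasure N))
          ≤ C * ∫ x : EuclideanSpace ℝ (Fin N), |f x| ^ 2 := by
  obtain ⟨n, rfl⟩ : ∃ n, N = n + 1 := ⟨N - 1, by omega⟩
  set Bn : ℝ := (volume (closedBall (0 : EuclideanSpace ℝ (Fin n)) 1)).toReal with hBn
  have hBnpos : 0 < Bn := by
    rw [hBn]
    apply ENNReal.toReal_pos
    · exact (measure_closedBall_pos volume 0 one_pos).ne'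
    · exact (isCompact_closedBall _ _).measure_lt_top.ne
  set M : ℝ := ((sphereMeasure (n+1)) Set.univ).toReal with hM
  have hM0 : 0 ≤ M := ENNReal.toReal_nonneg
  refine ⟨Bn * (M + 1), by positivity, fun f hf hsupp => ?_⟩
  have hR0 : 0 ≤ ∫ x : EuclideanSpace ℝ (Fin (n+1)), |f x| ^ 2 :=
    integral_nonneg fun x => by positivity
  have hle : ∀ ξ : sphere (0 : EuclideanSpace ℝ (Fin (n+1))) 1,
      (∫ X : ℝ, |radonTransform f X (ξ : EuclideanSpace ℝ (Fin (n+1)))| ^ 2)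
        ≤ Bn * ∫ x, |f x| ^ 2 := fun ξ =>
    radon_key (ξ : EuclideanSpace ℝ (Fin (n+1)))
      (by simpa using norm_eq_of_mem_sphere ξ) f hf hsupp
  haveI : IsFiniteMeasure (sphereMeasure (n+1)) := by
    constructor
    rw [sphereMeasure, Measure.smul_apply, smul_eq_mul]
    exact lt_of_le_of_lt (ENNReal.inv_mul_le_one _) ENNReal.one_lt_top
  by_cases hg : Integrable
      (fun ξ : sphere (0 : EuclideanSpace ℝ (Fin (n+1))) 1 =>
        ∫ X : ℝ, |radonTransform f X (ξ : EuclideanSpace ℝ (Fin (n+1)))| ^ 2)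
      (sphereMeasure (n+1))
  · calc (∫ ξ : sphere (0 : EuclideanSpace ℝ (Fin (n+1))) 1,
          (∫ X : ℝ, |radonTransform f X (ξ : EuclideanSpace ℝ (Fin (n+1)))| ^ 2)
            ∂(sphereMeasure (n+1)))
        ≤ ∫ _ξ : sphere (0 : EuclideanSpace ℝ (Fin (n+1))) 1,
            (Bn * ∫ x, |f x| ^ 2) ∂(sphereMeasure (n+1)) :=
          integral_mono hg (integrable_const _) hle
      _ = M * (Bn * ∫ x, |f x| ^ 2) := by rw [integral_const, smul_eq_mul, hM, measureReal_def]
      _ ≤ Bn * (M + 1) * ∫ x, |f x| ^ 2 := by nlinarith [mul_nonneg hBnpos.le hR0]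
  · rw [integral_undef hg]
    positivity
end

section
/- (Duality between the Radon transform and the back projection) Let N ≥ 2 and let f, h : ℝ^N → ℝ be Schwartz functions. Then ∫_{S^{N−1}} ∫_ℝ Rf(X,ξ) · Rh(X,ξ) dX dσ(ξ) = ∫_{ℝ^N} f(x) · I(Rh)(x) dx, where σ is the rotation-invariant probability measure on S^{N−1}. -/
open MeasureTheory Metric
open scoped RealInnerProductSpace


open Module

variable {N : ℕ}

local notation "E'" => EuclideanSpace ℝ (Fin N)

lemma orthonormal_aux (ξ : E') (hξ : ‖ξ‖ = 1) {ι : Type*} [Fintype ι]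
    (b₀ : OrthonormalBasis ι ℝ ((ℝ ∙ ξ)ᗮ : Submodule ℝ E')) :
    Orthonormal ℝ (Sum.elim (fun _ : Unit => ξ) (fun i => (b₀ i : E'))) := by
  classical
  rw [orthonormal_iff_ite]
  rintro (u | i) (v | j)
  · rcases u; rcases v
    simp only [Sum.elim_inl, if_pos rfl]
    rw [real_inner_self_eq_norm_mul_norm, hξ, mul_one]
    simp
  · have h0 := ((b₀ j).2 ξ (Submodule.mem_span_singleton_self ξ) :
      ⟪ξ, ((b₀ j : ((ℝ ∙ ξ)ᗮ : Submodule ℝ E')) : E')⟫ = 0)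
    simp only [Sum.elim_inl, Sum.elim_inr, if_neg (by simp : ¬ (Sum.inl u : Unit ⊕ ι) = Sum.inr j)]
    exact h0
  · have h0 := ((b₀ i).2 ξ (Submodule.mem_span_singleton_self ξ) :
      ⟪ξ, ((b₀ i : ((ℝ ∙ ξ)ᗮ : Submodule ℝ E')) : E')⟫ = 0)
    simp only [Sum.elim_inl, Sum.elim_inr, if_neg (by simp : ¬ (Sum.inr i : Unit ⊕ ι) = Sum.inl v)]
    rw [real_inner_comm]; exact h0
  · have h2 := (orthonormal_iff_ite.1 b₀.orthonormal) i j
    rw [Submodule.coe_inner] at h2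
    simp only [Sum.elim_inr, Sum.inr.injEq]
    exact h2

lemma span_aux (ξ : E') {ι : Type*} [Fintype ι]
    (b₀ : OrthonormalBasis ι ℝ ((ℝ ∙ ξ)ᗮ : Submodule ℝ E')) :
    ⊤ ≤ Submodule.span ℝ (Set.range (Sum.elim (fun _ : Unit => ξ) (fun i => (b₀ i : E')))) := by
  have h1 : (ℝ ∙ ξ) ⊔ ((ℝ ∙ ξ)ᗮ : Submodule ℝ E') = ⊤ := (Submodule.isCompl_orthogonal_of_hasOrthogonalProjection).sup_eq_top
  rw [← h1, sup_le_iff]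
  constructor
  · rw [Submodule.span_singleton_le_iff_mem]
    exact Submodule.subset_span ⟨Sum.inl (), rfl⟩
  · intro x hx
    have hx2 : (⟨x, hx⟩ : ((ℝ ∙ ξ)ᗮ : Submodule ℝ E')) = ∑ i, b₀.repr ⟨x, hx⟩ i • b₀ i :=
      (b₀.sum_repr ⟨x, hx⟩).symm
    have hxs : x = ∑ i, b₀.repr ⟨x, hx⟩ i • ((b₀ i : E')) := by
      have h3 := congrArg (Submodule.subtype _) hx2
      simpa using h3
    rw [hxs]
    exact Submodule.sum_mem _ fun i _ => Submodule.smul_mem _ _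
      (Submodule.subset_span ⟨Sum.inr i, rfl⟩)

lemma integral_decomp (ξ : E') (hξ : ‖ξ‖ = 1)
    (g : E' → ℝ) (hg : Integrable g) :
    ∫ x, g x = ∫ X : ℝ, ∫ y : ((ℝ ∙ ξ)ᗮ : Submodule ℝ E'), g (X • ξ + (y : E')) := by
  classical
  set K : Submodule ℝ E' := (ℝ ∙ ξ)ᗮ with hK
  set b₀ : OrthonormalBasis (Fin (finrank ℝ K)) ℝ K := stdOrthonormalBasis ℝ K with hb₀
  set B : OrthonormalBasis (Unit ⊕ Fin (finrank ℝ K)) ℝ E' :=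
    OrthonormalBasis.mk (orthonormal_aux ξ hξ b₀) (span_aux ξ b₀) with hB
  set Ψ : (ℝ × EuclideanSpace ℝ (Fin (finrank ℝ K))) ≃ᵐ
      EuclideanSpace ℝ (Unit ⊕ Fin (finrank ℝ K)) :=
    (MeasurableEquiv.prodCongr (MeasurableEquiv.funUnique Unit ℝ).symm
        (MeasurableEquiv.toLp 2 (Fin (finrank ℝ K) → ℝ)).symm).trans
      ((MeasurableEquiv.sumPiEquivProdPi (fun _ : Unit ⊕ Fin (finrank ℝ K) => ℝ)).symm.trans
        (MeasurableEquiv.toLp 2 (Unit ⊕ Fin (finrank ℝ K) → ℝ)).symm.symm) with hΨ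
  have mp1 := (MeasurePreserving.symm _ (volume_preserving_funUnique Unit ℝ)).prod
      (EuclideanSpace.volume_preserving_symm_measurableEquiv_toLp (Fin (finrank ℝ K)))
  have mp2 := volume_measurePreserving_sumPiEquivProdPi_symm
      (fun _ : Unit ⊕ Fin (finrank ℝ K) => ℝ)
  have mp3 := MeasurePreserving.symm _ (EuclideanSpace.volume_preserving_symm_measurableEquiv_toLp
      (Unit ⊕ Fin (finrank ℝ K)))
  rw [← Measure.volume_eq_prod] at mp1
  have mpΨ : MeasurePreserving Ψ volume volume := (mp3.comp mp2).comp mp1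
  have key : ∀ p : ℝ × EuclideanSpace ℝ (Fin (finrank ℝ K)),
      B.repr.symm (Ψ p) = p.1 • ξ + ((b₀.repr.symm p.2 : K) : E') := by
    intro p
    rw [← B.sum_repr_symm, Fintype.sum_sum_type]
    have h1 : ∀ u : Unit, (Ψ p) (Sum.inl u) = p.1 := fun _ => rfl
    have h2 : ∀ i, (Ψ p) (Sum.inr i) = p.2 i := fun _ => rfl
    have hBl : ∀ u : Unit, B (Sum.inl u) = ξ := by
      intro u; rw [hB, OrthonormalBasis.coe_mk]; rfl
    have hBr : ∀ i, B (Sum.inr i) = (b₀ i : E') := by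
      intro i; rw [hB, OrthonormalBasis.coe_mk]; rfl
    simp only [h1, h2, hBl, hBr]
    congr 1
    · simp
    · rw [← b₀.sum_repr_symm]
      push_cast [Submodule.coe_sum]
      rfl
  have hint : Integrable
      (fun p : ℝ × EuclideanSpace ℝ (Fin (finrank ℝ K)) =>
        g (p.1 • ξ + ((b₀.repr.symm p.2 : K) : E'))) volume := by
    have hgB : Integrable (g ∘ ⇑B.repr.symm) volume :=
      (B.measurePreserving_repr_symm.integrable_comp hg.aestronglyMeasurable).2 hg
    have h1 : Integrable ((g ∘ ⇑B.repr.symm) ∘ ⇑Ψ) volume :=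
      (mpΨ.integrable_comp hgB.aestronglyMeasurable).2 hgB
    have : ((g ∘ ⇑B.repr.symm) ∘ ⇑Ψ) = fun p => g (p.1 • ξ + ((b₀.repr.symm p.2 : K) : E')) := by
      funext p; simp [Function.comp, key p]
    rwa [this] at h1
  calc ∫ x, g x = ∫ w : EuclideanSpace ℝ (Unit ⊕ Fin (finrank ℝ K)), g (B.repr.symm w) :=
        (B.measurePreserving_repr_symm.integral_comp
          (B.repr.symm.toHomeomorph.measurableEmbedding) g).symm
    _ = ∫ p : ℝ × EuclideanSpace ℝ (Fin (finrank ℝ K)), g (B.repr.symm (Ψ p)) :=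
        (mpΨ.integral_comp Ψ.measurableEmbedding _).symm
    _ = ∫ p : ℝ × EuclideanSpace ℝ (Fin (finrank ℝ K)),
          g (p.1 • ξ + ((b₀.repr.symm p.2 : K) : E')) := by
        simp_rw [key]
    _ = ∫ X : ℝ, ∫ w : EuclideanSpace ℝ (Fin (finrank ℝ K)),
          g (X • ξ + ((b₀.repr.symm w : K) : E')) := by
        rw [Measure.volume_eq_prod] at hint ⊢
        exact integral_prod _ hint
    _ = ∫ X : ℝ, ∫ y : K, g (X • ξ + (y : E')) := by
        congr 1
        funext X
        exact b₀.measurePreserving_repr_symm.integral_comp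
          (b₀.repr.symm.toHomeomorph.measurableEmbedding) (fun y => g (X • ξ + (y : E')))

lemma schwartz_decay {F : Type*} [NormedAddCommGroup F] [NormedSpace ℝ F]
    (h : SchwartzMap F ℝ) (k : ℕ) :
    ∃ C, 0 ≤ C ∧ ∀ x, ‖h x‖ ≤ C * (1 + ‖x‖) ^ (-(k:ℝ)) := by
  refine ⟨2 ^ k * ((Finset.Iic ((k,0) : ℕ × ℕ)).sup fun m => SchwartzMap.seminorm ℝ m.1 m.2) h,
    by positivity, ?_⟩
  intro x
  have h1 := SchwartzMap.one_add_le_sup_seminorm_apply (𝕜 := ℝ) (m := (k,0)) (k := k) (n := 0)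
    le_rfl le_rfl h x
  rw [norm_iteratedFDeriv_zero] at h1
  have hpos : (0:ℝ) < 1 + ‖x‖ := by positivity
  rw [Real.rpow_neg hpos.le, Real.rpow_natCast, mul_comm _ ((1+‖x‖)^k)⁻¹, ← div_eq_inv_mul,
    le_div_iff₀ (by positivity)]
  calc ‖h x‖ * (1+‖x‖)^k = (1+‖x‖)^k * ‖h x‖ := mul_comm _ _
    _ ≤ _ := h1

lemma norm_le_norm_add_of_inner_zero {F : Type*} [NormedAddCommGroup F]
    [InnerProductSpace ℝ F] {a b : F} (hab : ⟪a, b⟫ = 0) : ‖b‖ ≤ ‖a + b‖ := by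
  have h2 : ‖a + b‖ ^ 2 = ‖a‖ ^ 2 + 2 * ⟪a, b⟫ + ‖b‖ ^ 2 := norm_add_sq_real a b
  rw [hab] at h2
  nlinarith [norm_nonneg (a + b), norm_nonneg b, norm_nonneg a, sq_nonneg ‖a‖]

lemma finrank_orthogonal_span {N : ℕ} (ξ : EuclideanSpace ℝ (Fin N)) (hξ : ‖ξ‖ = 1) :
    finrank ℝ ((ℝ ∙ ξ)ᗮ : Submodule ℝ (EuclideanSpace ℝ (Fin N))) = N - 1 := by
  have hne : ξ ≠ 0 := by intro h0; rw [h0] at hξ; simp at hξ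
  have h1 := Submodule.finrank_add_finrank_orthogonal (ℝ ∙ ξ)
  rw [finrank_span_singleton hne, finrank_euclideanSpace_fin] at h1
  omega

lemma radon_bound {N : ℕ} (hN : 1 ≤ N) (h : SchwartzMap (EuclideanSpace ℝ (Fin N)) ℝ) :
    ∃ M, 0 ≤ M ∧ ∀ ξ : EuclideanSpace ℝ (Fin N), ‖ξ‖ = 1 → ∀ X : ℝ,
      |radonTransform (fun y => h y) X ξ| ≤ M := by
  classical
  obtain ⟨C, hC0, hC⟩ := schwartz_decay h N
  set I₀ : ℝ := ∫ w : EuclideanSpace ℝ (Fin (N-1)), (1 + ‖w‖) ^ (-(N:ℝ)) with hI₀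
  have hI₀nn : 0 ≤ I₀ := integral_nonneg fun w => by positivity
  refine ⟨C * I₀, by positivity, ?_⟩
  intro ξ hξ X
  set K : Submodule ℝ (EuclideanSpace ℝ (Fin N)) := (ℝ ∙ ξ)ᗮ with hKdef
  have hfin : finrank ℝ K = N - 1 := finrank_orthogonal_span ξ hξ
  have hfinlt : (finrank ℝ K : ℝ) < (N:ℝ) := by
    rw [hfin]; exact_mod_cast Nat.sub_lt (by omega) one_pos
  have hintb : Integrable (fun y : K => C * (1 + ‖y‖) ^ (-(N:ℝ))) volume :=
    (integrable_one_add_norm hfinlt).const_mul C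
  have step1 : |radonTransform (fun y => h y) X ξ| ≤
      ∫ y : K, ‖h (X • ξ + (y : EuclideanSpace ℝ (Fin N)))‖ := by
    rw [radonTransform, ← Real.norm_eq_abs]
    exact norm_integral_le_integral_norm _
  have step2 : (∫ y : K, ‖h (X • ξ + (y : EuclideanSpace ℝ (Fin N)))‖) ≤
      ∫ y : K, C * (1 + ‖y‖) ^ (-(N:ℝ)) := by
    apply integral_mono_of_nonneg (Filter.Eventually.of_forall fun y => norm_nonneg _) hintb
    apply Filter.Eventually.of_forall
    intro y
    have hy0 : ⟪X • ξ, (y : EuclideanSpace ℝ (Fin N))⟫ = 0 := by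
      rw [real_inner_smul_left]
      have := y.2 ξ (Submodule.mem_span_singleton_self ξ)
      rw [this]; ring
    have hle : ‖(y : EuclideanSpace ℝ (Fin N))‖ ≤ ‖X • ξ + (y : EuclideanSpace ℝ (Fin N))‖ :=
      norm_le_norm_add_of_inner_zero hy0
    calc ‖h (X • ξ + (y : EuclideanSpace ℝ (Fin N)))‖
        ≤ C * (1 + ‖X • ξ + (y : EuclideanSpace ℝ (Fin N))‖) ^ (-(N:ℝ)) := hC _
      _ ≤ C * (1 + ‖(y : EuclideanSpace ℝ (Fin N))‖) ^ (-(N:ℝ)) := by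
          apply mul_le_mul_of_nonneg_left _ hC0
          apply Real.rpow_le_rpow_of_nonpos (by positivity) (by linarith)
          simp [Nat.cast_nonneg]
      _ = C * (1 + ‖y‖) ^ (-(N:ℝ)) := rfl
  have step3 : (∫ y : K, C * (1 + ‖y‖) ^ (-(N:ℝ))) = C * I₀ := by
    rw [MeasureTheory.integral_const_mul]
    congr 1
    set b₀ : OrthonormalBasis (Fin (N-1)) ℝ K :=
      (stdOrthonormalBasis ℝ K).reindex (finCongr hfin) with hb₀
    have := b₀.measurePreserving_repr_symm.integral_comp
      (b₀.repr.symm.toHomeomorph.measurableEmbedding)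
      (fun y : K => (1 + ‖y‖) ^ (-(N:ℝ)))
    rw [← this, hI₀]
    congr 1
    funext w
    rw [b₀.repr.symm.norm_map]
  linarith

section Reflection

variable {F : Type*} [NormedAddCommGroup F] [InnerProductSpace ℝ F] [FiniteDimensional ℝ F]

lemma reflection_eq_T (v y : F) :
    (Submodule.reflection ((ℝ ∙ v)ᗮ) y : F) = y - (2 * ⟪v, y⟫ / ‖v‖ ^ 2) • v := by
  rw [Submodule.reflection_apply, Submodule.starProjection_orthogonal_val,
    Submodule.starProjection_singleton]
  push_cast
  simp only [RCLike.ofReal_real_eq_id, id_eq]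
  module

noncomputable def isomOfMapsTo (e : F ≃ₗᵢ[ℝ] F) (K K' : Submodule ℝ F)
    (hmap : ∀ y ∈ K, e y ∈ K') (hmap' : ∀ z ∈ K', e.symm z ∈ K) : K ≃ₗᵢ[ℝ] K' :=
  { toLinearEquiv :=
    { toFun := fun y => ⟨e y, hmap y y.2⟩
      invFun := fun z => ⟨e.symm z, hmap' z z.2⟩
      map_add' := fun a b => Subtype.ext (by simp)
      map_smul' := fun c a => Subtype.ext (by simp)
      left_inv := fun a => Subtype.ext (by simp)
      right_inv := fun a => Subtype.ext (by simp) }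
    norm_map' := fun a => e.norm_map a }

@[simp] lemma isomOfMapsTo_coe (e : F ≃ₗᵢ[ℝ] F) (K K' : Submodule ℝ F)
    (hmap : ∀ y ∈ K, e y ∈ K') (hmap' : ∀ z ∈ K', e.symm z ∈ K) (y : K) :
    ((isomOfMapsTo e K K' hmap hmap' y : K') : F) = e (y : F) := rfl

lemma reflection_unit (ξ₀ ξ : F) (hξ₀ : ‖ξ₀‖ = 1) (hξ : ‖ξ‖ = 1) :
    Submodule.reflection ((ℝ ∙ (ξ₀ + ξ))ᗮ) ξ₀ = -ξ := by
  have h1 : ‖ξ₀‖ = ‖-ξ‖ := by rw [norm_neg, hξ₀, hξ]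
  have := Submodule.reflection_sub h1
  rwa [sub_neg_eq_add] at this

lemma reflection_mapsTo {ξ₀ ξ : F} (hξ₀ : ‖ξ₀‖ = 1) (hξ : ‖ξ‖ = 1) :
    ∀ y ∈ ((ℝ ∙ ξ₀)ᗮ : Submodule ℝ F),
      Submodule.reflection ((ℝ ∙ (ξ₀ + ξ))ᗮ) y ∈ ((ℝ ∙ ξ)ᗮ : Submodule ℝ F) := by
  intro y hy
  set R := Submodule.reflection ((ℝ ∙ (ξ₀ + ξ))ᗮ) with hR
  rw [Submodule.mem_orthogonal_singleton_iff_inner_left] at hy ⊢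
  have h2 : ⟪R y, R ξ₀⟫ = ⟪y, ξ₀⟫ := R.inner_map_map y ξ₀
  rw [reflection_unit ξ₀ ξ hξ₀ hξ, inner_neg_right, hy, neg_eq_zero] at h2
  exact h2

lemma reflection_mapsTo' {ξ₀ ξ : F} (hξ₀ : ‖ξ₀‖ = 1) (hξ : ‖ξ‖ = 1) :
    ∀ z ∈ ((ℝ ∙ ξ)ᗮ : Submodule ℝ F),
      (Submodule.reflection ((ℝ ∙ (ξ₀ + ξ))ᗮ)).symm z ∈ ((ℝ ∙ ξ₀)ᗮ : Submodule ℝ F) := by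
  intro z hz
  rw [Submodule.reflection_symm]
  set R := Submodule.reflection ((ℝ ∙ (ξ₀ + ξ))ᗮ) with hR
  rw [Submodule.mem_orthogonal_singleton_iff_inner_left] at hz ⊢
  have h4 : R (-ξ) = ξ₀ := by
    rw [← reflection_unit ξ₀ ξ hξ₀ hξ]; exact Submodule.reflection_involutive _ ξ₀
  have h2 : ⟪R z, R (-ξ)⟫ = ⟪z, -ξ⟫ := R.inner_map_map z (-ξ)
  rw [h4, inner_neg_right, hz, neg_zero] at h2
  exact h2

end Reflection

lemma radon_chart {N : ℕ} (h : EuclideanSpace ℝ (Fin N) → ℝ)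
    {ξ₀ ξ : EuclideanSpace ℝ (Fin N)} (hξ₀ : ‖ξ₀‖ = 1) (hξ : ‖ξ‖ = 1)
    {ι : Type*} [Fintype ι]
    (b₁ : OrthonormalBasis ι ℝ ((ℝ ∙ ξ₀)ᗮ : Submodule ℝ (EuclideanSpace ℝ (Fin N)))) (X : ℝ) :
    radonTransform h X ξ =
      ∫ w : EuclideanSpace ℝ ι,
        h (X • ξ + Submodule.reflection ((ℝ ∙ (ξ₀ + ξ))ᗮ)
          ((b₁.repr.symm w : ((ℝ ∙ ξ₀)ᗮ : Submodule ℝ (EuclideanSpace ℝ (Fin N)))) :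
            EuclideanSpace ℝ (Fin N))) := by
  set R := Submodule.reflection ((ℝ ∙ (ξ₀ + ξ))ᗮ :
    Submodule ℝ (EuclideanSpace ℝ (Fin N))) with hR
  set Φ := isomOfMapsTo R ((ℝ ∙ ξ₀)ᗮ) ((ℝ ∙ ξ)ᗮ)
    (reflection_mapsTo hξ₀ hξ) (reflection_mapsTo' hξ₀ hξ) with hΦ
  have step1 : radonTransform h X ξ =
      ∫ y : ((ℝ ∙ ξ₀)ᗮ : Submodule ℝ (EuclideanSpace ℝ (Fin N))),
        h (X • ξ + ((Φ y : ((ℝ ∙ ξ)ᗮ : Submodule ℝ (EuclideanSpace ℝ (Fin N)))) :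
          EuclideanSpace ℝ (Fin N))) := by
    rw [radonTransform]
    exact (Φ.measurePreserving.integral_comp (Φ.toHomeomorph.measurableEmbedding)
      (fun z => h (X • ξ + (z : EuclideanSpace ℝ (Fin N))))).symm
  rw [step1]
  exact (b₁.measurePreserving_repr_symm.integral_comp
    (b₁.repr.symm.toHomeomorph.measurableEmbedding)
    (fun y => h (X • ξ + ((Φ y : ((ℝ ∙ ξ)ᗮ : Submodule ℝ (EuclideanSpace ℝ (Fin N)))) :
      EuclideanSpace ℝ (Fin N))))).symm

lemma radon_contAt (hN : 2 ≤ N) (h : SchwartzMap (EuclideanSpace ℝ (Fin N)) ℝ)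
    (ξ₀ : EuclideanSpace ℝ (Fin N)) (hξ₀ : ‖ξ₀‖ = 1)
    (p₀ : sphere (0 : EuclideanSpace ℝ (Fin N)) 1 × EuclideanSpace ℝ (Fin N))
    (hp₀ : (p₀.1 : EuclideanSpace ℝ (Fin N)) ≠ -ξ₀) :
    ContinuousAt (fun p : sphere (0 : EuclideanSpace ℝ (Fin N)) 1 × EuclideanSpace ℝ (Fin N) =>
      radonTransform (fun y => h y) ⟪(p.1 : EuclideanSpace ℝ (Fin N)), p.2⟫
        (p.1 : EuclideanSpace ℝ (Fin N))) p₀ := by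
  classical
  obtain ⟨C, hC0, hC⟩ := schwartz_decay h N
  set K₀ : Submodule ℝ E' := (ℝ ∙ ξ₀)ᗮ with hK₀
  set b₁ : OrthonormalBasis (Fin (N-1)) ℝ K₀ :=
    (stdOrthonormalBasis ℝ K₀).reindex (finCongr (finrank_orthogonal_span ξ₀ hξ₀)) with hb₁
  set S : Set (sphere (0 : E') 1 × E') := {p | (p.1 : E') ≠ -ξ₀} with hS
  have hSopen : IsOpen S := by
    have : S = (fun p : sphere (0 : E') 1 × E' => (p.1 : E')) ⁻¹' ({-ξ₀}ᶜ) := rfl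
    rw [this]
    exact (isOpen_compl_singleton).preimage (continuous_subtype_val.comp continuous_fst)
  have hmem : p₀ ∈ S := hp₀
  -- the function G with explicit formula
  set G : sphere (0 : E') 1 × E' → ℝ := fun p =>
    ∫ w : EuclideanSpace ℝ (Fin (N-1)),
      h (⟪(p.1 : E'), p.2⟫ • (p.1 : E') +
        (((b₁.repr.symm w : K₀) : E') -
          (2 * ⟪ξ₀ + (p.1 : E'), ((b₁.repr.symm w : K₀) : E')⟫ / ‖ξ₀ + (p.1 : E')‖ ^ 2) •
            (ξ₀ + (p.1 : E')))) with hG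
  have hunit : ∀ p : sphere (0 : E') 1 × E', ‖(p.1 : E')‖ = 1 := fun p =>
    mem_sphere_zero_iff_norm.1 p.1.2
  have hFG : ∀ p, radonTransform (fun y => h y) ⟪(p.1 : E'), p.2⟫ (p.1 : E') = G p := by
    intro p
    rw [radon_chart (fun y => h y) hξ₀ (hunit p) b₁ ⟪(p.1 : E'), p.2⟫, hG]
    congr 1
    funext w
    rw [reflection_eq_T]
  have harg : ∀ (p : sphere (0 : E') 1 × E') (w : EuclideanSpace ℝ (Fin (N-1))),
      (⟪(p.1 : E'), p.2⟫ • (p.1 : E') +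
        (((b₁.repr.symm w : K₀) : E') -
          (2 * ⟪ξ₀ + (p.1 : E'), ((b₁.repr.symm w : K₀) : E')⟫ / ‖ξ₀ + (p.1 : E')‖ ^ 2) •
            (ξ₀ + (p.1 : E')))) =
      ⟪(p.1 : E'), p.2⟫ • (p.1 : E') +
        Submodule.reflection ((ℝ ∙ (ξ₀ + (p.1 : E')))ᗮ) ((b₁.repr.symm w : K₀) : E') := by
    intro p w
    rw [reflection_eq_T]
  have hGcont : ContinuousOn G S := by
    apply continuousOn_of_dominated (bound := fun w => C * (1 + ‖w‖) ^ (-(N:ℝ)))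
    · intro p hp
      apply Continuous.aestronglyMeasurable
      apply h.continuous.comp
      have cy : Continuous fun w : EuclideanSpace ℝ (Fin (N-1)) => ((b₁.repr.symm w : K₀) : E') :=
        continuous_subtype_val.comp b₁.repr.symm.continuous
      have cd : Continuous fun w : EuclideanSpace ℝ (Fin (N-1)) =>
          (2 * ⟪ξ₀ + (p.1 : E'), ((b₁.repr.symm w : K₀) : E')⟫ / ‖ξ₀ + (p.1 : E')‖ ^ 2) :=
        (continuous_const.mul (continuous_const.inner cy)).div_const _
      exact continuous_const.add (cy.sub (cd.smul continuous_const))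
    · intro p hp
      apply Filter.Eventually.of_forall
      intro w
      rw [harg p w]
      set y : E' := ((b₁.repr.symm w : K₀) : E') with hy
      set R := Submodule.reflection ((ℝ ∙ (ξ₀ + (p.1 : E')))ᗮ :
        Submodule ℝ E') with hRdef
      have hyK : y ∈ K₀ := (b₁.repr.symm w).2
      have hRy : R y ∈ ((ℝ ∙ ((p.1 : E')))ᗮ : Submodule ℝ E') :=
        reflection_mapsTo hξ₀ (hunit p) y hyK
      have hRy0 : ⟪(p.1 : E'), R y⟫ = 0 := by
        rw [Submodule.mem_orthogonal_singleton_iff_inner_left] at hRy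
        rw [real_inner_comm]; exact hRy
      have hinner : ⟪⟪(p.1 : E'), p.2⟫ • (p.1 : E'), R y⟫ = 0 := by
        rw [real_inner_smul_left, hRy0, mul_zero]
      have hnorm : ‖R y‖ = ‖w‖ := by
        rw [R.norm_map]
        have : ‖y‖ = ‖b₁.repr.symm w‖ := rfl
        rw [this, b₁.repr.symm.norm_map]
      have hle : ‖w‖ ≤ ‖⟪(p.1 : E'), p.2⟫ • (p.1 : E') + R y‖ := by
        rw [← hnorm]
        exact norm_le_norm_add_of_inner_zero hinner
      calc ‖h (⟪(p.1 : E'), p.2⟫ • (p.1 : E') + R y)‖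
          ≤ C * (1 + ‖⟪(p.1 : E'), p.2⟫ • (p.1 : E') + R y‖) ^ (-(N:ℝ)) := hC _
        _ ≤ C * (1 + ‖w‖) ^ (-(N:ℝ)) := by
            apply mul_le_mul_of_nonneg_left _ hC0
            apply Real.rpow_le_rpow_of_nonpos (by positivity) (by linarith)
            simp [Nat.cast_nonneg]
    · have hlt : ((finrank ℝ (EuclideanSpace ℝ (Fin (N-1)))) : ℝ) < (N : ℝ) := by
        rw [finrank_euclideanSpace_fin]
        exact_mod_cast Nat.sub_lt (by omega) one_pos
      exact (integrable_one_add_norm hlt).const_mul C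
    · apply Filter.Eventually.of_forall
      intro w
      set y : E' := ((b₁.repr.symm w : K₀) : E') with hy
      have c1 : Continuous fun p : sphere (0 : E') 1 × E' => (p.1 : E') :=
        continuous_subtype_val.comp continuous_fst
      have c2 : Continuous fun p : sphere (0 : E') 1 × E' => ⟪(p.1 : E'), p.2⟫ :=
        c1.inner continuous_snd
      have c3 : Continuous fun p : sphere (0 : E') 1 × E' => ⟪(p.1 : E'), p.2⟫ • (p.1 : E') :=
        c2.smul c1
      have c4 : Continuous fun p : sphere (0 : E') 1 × E' => ξ₀ + (p.1 : E') :=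
        continuous_const.add c1
      have c5 : Continuous fun p : sphere (0 : E') 1 × E' => 2 * ⟪ξ₀ + (p.1 : E'), y⟫ :=
        continuous_const.mul (c4.inner continuous_const)
      have c6 : Continuous fun p : sphere (0 : E') 1 × E' => ‖ξ₀ + (p.1 : E')‖ ^ 2 :=
        (c4.norm).pow 2
      have hdiv : ContinuousOn (fun p : sphere (0 : E') 1 × E' =>
          2 * ⟪ξ₀ + (p.1 : E'), y⟫ / ‖ξ₀ + (p.1 : E')‖ ^ 2) S := by
        apply ContinuousOn.div c5.continuousOn c6.continuousOn
        intro p hp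
        have hne : ξ₀ + (p.1 : E') ≠ 0 := by
          intro h0
          exact hp (by rw [eq_neg_of_add_eq_zero_right h0])
        exact pow_ne_zero 2 (norm_ne_zero_iff.2 hne)
      apply (h.continuous.comp_continuousOn ?_)
      apply ContinuousOn.add c3.continuousOn
      apply ContinuousOn.sub continuousOn_const
      exact hdiv.smul c4.continuousOn
  have hGAt : ContinuousAt G p₀ := hGcont.continuousAt (hSopen.mem_nhds hmem)
  exact hGAt.congr (Filter.Eventually.of_forall fun p => (hFG p).symm)

lemma radon_cont (hN : 2 ≤ N) (h : SchwartzMap E' ℝ) :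
    Continuous (fun p : sphere (0 : E') 1 × E' =>
      radonTransform (fun y => h y) ⟪(p.1 : E'), p.2⟫ (p.1 : E')) := by
  rw [continuous_iff_continuousAt]
  intro p₀
  set e₀ : E' := EuclideanSpace.single ⟨0, by omega⟩ (1:ℝ) with he₀def
  set e₁ : E' := EuclideanSpace.single ⟨1, by omega⟩ (1:ℝ) with he₁def
  have he₀ : ‖e₀‖ = 1 := by rw [he₀def, EuclideanSpace.norm_single]; norm_num
  have he₁ : ‖e₁‖ = 1 := by rw [he₁def, EuclideanSpace.norm_single]; norm_num
  by_cases hcase : (p₀.1 : E') = -e₀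
  · apply radon_contAt hN h e₁ he₁
    rw [hcase]
    intro hq
    have heq : e₀ = e₁ := neg_inj.1 hq
    have h0 := congrFun (congrArg (fun v : E' => (v : Fin N → ℝ)) heq) ⟨0, by omega⟩
    rw [he₀def, he₁def] at h0
    simp only [EuclideanSpace.single_apply] at h0
    norm_num [Fin.ext_iff] at h0
  · exact radon_contAt hN h e₀ he₀ p₀ hcase

instance sphereMeasure_finite (N : ℕ) : IsFiniteMeasure (sphereMeasure N) := by
  refine ⟨?_⟩
  rw [sphereMeasure, Measure.smul_apply, smul_eq_mul]
  exact lt_of_le_of_lt (ENNReal.inv_mul_le_one _) ENNReal.one_lt_top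

lemma cont_slice (hN : 2 ≤ N) (h : SchwartzMap E' ℝ) (ξ : sphere (0 : E') 1) :
    Continuous fun x : E' =>
      radonTransform (fun y => h y) ⟪(ξ : E'), x⟫ (ξ : E') := by
  have h1 := radon_cont hN h
  have h2 : Continuous fun x : E' => ((ξ, x) : sphere (0 : E') 1 × E') :=
    continuous_const.prodMk continuous_id
  have h3 : (fun x : E' => radonTransform (fun y => h y) ⟪(ξ : E'), x⟫ (ξ : E')) =
      (fun p : sphere (0 : E') 1 × E' =>
        radonTransform (fun y => h y) ⟪(p.1 : E'), p.2⟫ (p.1 : E')) ∘ (fun x => (ξ, x)) := rfl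
  rw [h3]
  exact h1.comp h2

lemma integrable_fF (hN : 2 ≤ N) (f h : SchwartzMap E' ℝ) (ξ : sphere (0 : E') 1) :
    Integrable (fun x : E' =>
      f x * radonTransform (fun y => h y) ⟪(ξ : E'), x⟫ (ξ : E')) volume := by
  have hξ : ‖(ξ : E')‖ = 1 := mem_sphere_zero_iff_norm.1 ξ.2
  obtain ⟨M, hM0, hM⟩ := radon_bound (by omega) h
  have hcontR := cont_slice hN h ξ
  have h1 := (f.integrable (μ := volume)).bdd_mul (c := M) hcontR.aestronglyMeasurable
    (Filter.Eventually.of_forall fun x => by rw [Real.norm_eq_abs]; exact hM _ hξ _)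
  have h2 : (fun x : E' => radonTransform (fun y => h y) ⟪(ξ : E'), x⟫ (ξ : E') * f x) =
      fun x : E' => f x * radonTransform (fun y => h y) ⟪(ξ : E'), x⟫ (ξ : E') := by
    funext x; ring
  rwa [h2] at h1

lemma radon_key_s9 (hN : 2 ≤ N) (f h : SchwartzMap E' ℝ) (ξ : sphere (0 : E') 1) :
    (∫ X : ℝ, radonTransform (fun y => f y) X (ξ : E') *
        radonTransform (fun y => h y) X (ξ : E'))
      = ∫ x : E', f x * radonTransform (fun y => h y) ⟪(ξ : E'), x⟫ (ξ : E') := by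
  have hξ : ‖(ξ : E')‖ = 1 := mem_sphere_zero_iff_norm.1 ξ.2
  rw [integral_decomp (ξ : E') hξ _ (integrable_fF hN f h ξ)]
  congr 1
  funext X
  have hval : ∀ y : ((ℝ ∙ ((ξ : E')))ᗮ : Submodule ℝ E'),
      ⟪(ξ : E'), X • (ξ : E') + (y : E')⟫ = X := by
    intro y
    rw [inner_add_right, real_inner_smul_right, real_inner_self_eq_norm_mul_norm, hξ]
    have h0 := y.2 (ξ : E') (Submodule.mem_span_singleton_self _)
    rw [h0]; ring
  have step : (∫ y : ((ℝ ∙ ((ξ : E')))ᗮ : Submodule ℝ E'),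
        f (X • (ξ : E') + (y : E')) *
          radonTransform (fun y => h y) ⟪(ξ : E'), X • (ξ : E') + (y : E')⟫ (ξ : E'))
      = ∫ y : ((ℝ ∙ ((ξ : E')))ᗮ : Submodule ℝ E'),
          f (X • (ξ : E') + (y : E')) * radonTransform (fun y => h y) X (ξ : E') := by
    congr 1
    funext y
    rw [hval y]
  rw [step, MeasureTheory.integral_mul_const]
  rfl

theorem radon_backProjection_duality (N : ℕ) (hN : 2 ≤ N)
    (f h : SchwartzMap (EuclideanSpace ℝ (Fin N)) ℝ) :
    (∫ ξ : sphere (0 : EuclideanSpace ℝ (Fin N)) 1,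
        (∫ X : ℝ, radonTransform (fun y => f y) X (ξ : EuclideanSpace ℝ (Fin N)) *
            radonTransform (fun y => h y) X (ξ : EuclideanSpace ℝ (Fin N)))
          ∂(sphereMeasure N))
      = ∫ x : EuclideanSpace ℝ (Fin N),
          f x * backProjection (radonTransform (fun y => h y)) x := by
  obtain ⟨M, hM0, hM⟩ := radon_bound (N := N) (by omega) h
  have hunit : ∀ ξ : sphere (0 : EuclideanSpace ℝ (Fin N)) 1,
      ‖(ξ : EuclideanSpace ℝ (Fin N))‖ = 1 := fun ξ => mem_sphere_zero_iff_norm.1 ξ.2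
  have hcontF : Continuous (fun p : sphere (0 : EuclideanSpace ℝ (Fin N)) 1 ×
      EuclideanSpace ℝ (Fin N) => f p.2 * radonTransform (fun y => h y)
        ⟪(p.1 : EuclideanSpace ℝ (Fin N)), p.2⟫ (p.1 : EuclideanSpace ℝ (Fin N))) :=
    (f.continuous.comp continuous_snd).mul (radon_cont hN h)
  have hInt : Integrable (Function.uncurry fun (ξ : sphere (0 : EuclideanSpace ℝ (Fin N)) 1)
      (x : EuclideanSpace ℝ (Fin N)) => f x * radonTransform (fun y => h y)
        ⟪(ξ : EuclideanSpace ℝ (Fin N)), x⟫ (ξ : EuclideanSpace ℝ (Fin N)))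
      ((sphereMeasure N).prod volume) := by
    have hrw : (Function.uncurry fun (ξ : sphere (0 : EuclideanSpace ℝ (Fin N)) 1)
        (x : EuclideanSpace ℝ (Fin N)) => f x * radonTransform (fun y => h y)
          ⟪(ξ : EuclideanSpace ℝ (Fin N)), x⟫ (ξ : EuclideanSpace ℝ (Fin N))) =
        (fun p : sphere (0 : EuclideanSpace ℝ (Fin N)) 1 ×
          EuclideanSpace ℝ (Fin N) => f p.2 * radonTransform (fun y => h y)
            ⟪(p.1 : EuclideanSpace ℝ (Fin N)), p.2⟫ (p.1 : EuclideanSpace ℝ (Fin N))) := rfl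
    rw [hrw, integrable_prod_iff hcontF.aestronglyMeasurable]
    constructor
    · exact Filter.Eventually.of_forall fun ξ => integrable_fF hN f h ξ
    · have hsm : StronglyMeasurable fun ξ : sphere (0 : EuclideanSpace ℝ (Fin N)) 1 =>
          ∫ x : EuclideanSpace ℝ (Fin N), ‖f x * radonTransform (fun y => h y)
            ⟪(ξ : EuclideanSpace ℝ (Fin N)), x⟫ (ξ : EuclideanSpace ℝ (Fin N))‖ :=
        (hcontF.norm.stronglyMeasurable).integral_prod_right'
      refine Integrable.mono'
        (integrable_const (M * ∫ x : EuclideanSpace ℝ (Fin N), ‖f x‖))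
        hsm.aestronglyMeasurable ?_
      refine Filter.Eventually.of_forall fun ξ => ?_
      rw [Real.norm_eq_abs, abs_of_nonneg (integral_nonneg fun x => norm_nonneg _)]
      have hb : ∀ x : EuclideanSpace ℝ (Fin N),
          ‖f x * radonTransform (fun y => h y)
            ⟪(ξ : EuclideanSpace ℝ (Fin N)), x⟫ (ξ : EuclideanSpace ℝ (Fin N))‖ ≤
            M * ‖f x‖ := by
        intro x
        rw [norm_mul]
        calc ‖f x‖ * ‖radonTransform (fun y => h y)
              ⟪(ξ : EuclideanSpace ℝ (Fin N)), x⟫ (ξ : EuclideanSpace ℝ (Fin N))‖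
            ≤ ‖f x‖ * M := by
              apply mul_le_mul_of_nonneg_left _ (norm_nonneg _)
              rw [Real.norm_eq_abs]
              exact hM _ (hunit ξ) _
          _ = M * ‖f x‖ := mul_comm _ _
      calc (∫ x : EuclideanSpace ℝ (Fin N), ‖f x * radonTransform (fun y => h y)
              ⟪(ξ : EuclideanSpace ℝ (Fin N)), x⟫ (ξ : EuclideanSpace ℝ (Fin N))‖)
          ≤ ∫ x : EuclideanSpace ℝ (Fin N), M * ‖f x‖ :=
            integral_mono_of_nonneg (Filter.Eventually.of_forall fun x => norm_nonneg _)
              (((f.integrable (μ := volume)).norm).const_mul M)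
              (Filter.Eventually.of_forall hb)
        _ = M * ∫ x : EuclideanSpace ℝ (Fin N), ‖f x‖ := MeasureTheory.integral_const_mul _ _
  calc (∫ ξ : sphere (0 : EuclideanSpace ℝ (Fin N)) 1,
        (∫ X : ℝ, radonTransform (fun y => f y) X (ξ : EuclideanSpace ℝ (Fin N)) *
            radonTransform (fun y => h y) X (ξ : EuclideanSpace ℝ (Fin N)))
          ∂(sphereMeasure N))
      = ∫ ξ : sphere (0 : EuclideanSpace ℝ (Fin N)) 1,
          (∫ x : EuclideanSpace ℝ (Fin N), f x * radonTransform (fun y => h y)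
            ⟪(ξ : EuclideanSpace ℝ (Fin N)), x⟫ (ξ : EuclideanSpace ℝ (Fin N)))
          ∂(sphereMeasure N) :=
        integral_congr_ae (Filter.Eventually.of_forall fun ξ => radon_key_s9 hN f h ξ)
    _ = ∫ x : EuclideanSpace ℝ (Fin N),
          (∫ ξ : sphere (0 : EuclideanSpace ℝ (Fin N)) 1, f x * radonTransform (fun y => h y)
            ⟪(ξ : EuclideanSpace ℝ (Fin N)), x⟫ (ξ : EuclideanSpace ℝ (Fin N))
            ∂(sphereMeasure N)) :=
        integral_integral_swap hInt
    _ = ∫ x : EuclideanSpace ℝ (Fin N),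
          f x * backProjection (radonTransform (fun y => h y)) x := by
        congr 1
        funext x
        rw [backProjection]
        exact MeasureTheory.integral_const_mul _ _
end

section
/- (Smith–Solomon–Wagner, uniqueness part) Let f : ℝ² → ℝ be a continuous function with compact support, and let S ⊆ S¹ be an infinite set of unit vectors. If Rf(X,ξ) = 0 for every X ∈ ℝ and every ξ ∈ S, then f = 0 identically; i.e., a compactly supported function in the plane is uniquely determined by any infinite set of its tomograms. -/
open MeasureTheory Metric
open scoped RealInnerProductSpace

section Aux

open Complex Polynomial

private abbrev E2' := EuclideanSpace ℝ (Fin 2)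

private lemma moment_eq_zero' (f : E2' → ℝ) (hf : Continuous f) (hsupp : HasCompactSupport f)
    (ξ : E2') (hξ : ‖ξ‖ = 1) (h : ∀ X : ℝ, radonTransform f X ξ = 0) (k : ℕ) :
    ∫ x : E2', ⟪ξ, x⟫ ^ k * f x = 0 := by
  have hξ0 : ξ ≠ 0 := by intro h0; rw [h0, norm_zero] at hξ; norm_num at hξ
  set K : Submodule ℝ E2' := ℝ ∙ ξ with hK
  have hrKp : Module.finrank ℝ Kᗮ = 1 := by
    have h1 : Module.finrank ℝ K = 1 := finrank_span_singleton hξ0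
    have := Submodule.finrank_add_finrank_orthogonal (K := K)
    rw [h1, finrank_euclideanSpace_fin] at this
    omega
  let b1 : OrthonormalBasis (Fin 1) ℝ Kᗮ := (stdOrthonormalBasis ℝ Kᗮ).reindex (finCongr hrKp)
  set η₀ : Kᗮ := b1 0 with hη₀
  set η : E2' := (η₀ : E2') with hηdef
  have hη_mem : η ∈ Kᗮ := η₀.2
  have hηnorm : ‖η‖ = 1 := by
    have := b1.orthonormal.1 0
    rw [hηdef]
    exact this
  have hξη : ⟪ξ, η⟫ = 0 :=
    Submodule.inner_right_of_mem_orthogonal (Submodule.mem_span_singleton_self ξ) hη_mem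
  -- Φ1 : ℝ ≃ᵐ Kᗮ
  let Φ1 : ℝ ≃ᵐ Kᗮ := ((MeasurableEquiv.funUnique (Fin 1) ℝ).symm.trans
    (MeasurableEquiv.toLp 2 (Fin 1 → ℝ))).trans
    b1.repr.symm.toHomeomorph.toMeasurableEquiv
  have hmp1 : MeasurePreserving Φ1 volume volume :=
    b1.measurePreserving_repr_symm.comp
      (((EuclideanSpace.volume_preserving_symm_measurableEquiv_toLp (Fin 1)).symm _).comp
        ((volume_preserving_funUnique (Fin 1) ℝ).symm _))
  have happ1 : ∀ s : ℝ, (Φ1 s : Kᗮ) = s • η₀ := by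
    intro s
    show b1.repr.symm _ = _
    rw [← b1.sum_repr_symm]
    simp [MeasurableEquiv.coe_toLp, MeasurableEquiv.funUnique, hη₀]
  -- radon transform as a line integral
  have hradon : ∀ X : ℝ, radonTransform f X ξ = ∫ t : ℝ, f (X • ξ + t • η) := by
    intro X
    rw [radonTransform, ← hmp1.integral_comp Φ1.measurableEmbedding
      (fun y : Kᗮ => f (X • ξ + (y : E2')))]
    refine integral_congr_ae (Filter.Eventually.of_forall fun s => ?_)
    simp only [happ1 s, hηdef, Submodule.coe_smul]
  -- Φ2 : ℝ × ℝ ≃ᵐ E2'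
  have horth : Orthonormal ℝ ![ξ, η] := by
    rw [orthonormal_iff_ite]
    intro i j
    fin_cases i <;> fin_cases j <;>
      simp only [Matrix.cons_val_zero, Matrix.cons_val_one, Matrix.head_cons,
        Fin.mk_zero, Fin.mk_one, if_true, reduceIte]
    · rw [real_inner_self_eq_norm_sq, hξ]; norm_num
    · exact hξη
    · rw [real_inner_comm]; exact hξη
    · rw [real_inner_self_eq_norm_sq, hηnorm]; norm_num
  have hspan : ⊤ ≤ Submodule.span ℝ (Set.range ![ξ, η]) :=
    ge_of_eq (horth.linearIndependent.span_eq_top_of_card_eq_finrank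
      (by simp [finrank_euclideanSpace_fin]))
  let b2 : OrthonormalBasis (Fin 2) ℝ E2' := OrthonormalBasis.mk horth hspan
  let Φ2 : (ℝ × ℝ) ≃ᵐ E2' := ((MeasurableEquiv.finTwoArrow).symm.trans
    (MeasurableEquiv.toLp 2 (Fin 2 → ℝ))).trans
    b2.repr.symm.toHomeomorph.toMeasurableEquiv
  have hmp2 : MeasurePreserving Φ2 volume volume :=
    b2.measurePreserving_repr_symm.comp
      (((EuclideanSpace.volume_preserving_symm_measurableEquiv_toLp (Fin 2)).symm _).comp
        ((volume_preserving_finTwoArrow ℝ).symm _))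
  have happ2 : ∀ p : ℝ × ℝ, Φ2 p = p.1 • ξ + p.2 • η := by
    intro p
    show b2.repr.symm _ = _
    rw [← b2.sum_repr_symm]
    simp [Fin.sum_univ_two, MeasurableEquiv.coe_toLp, b2, OrthonormalBasis.coe_mk]
  -- integrability
  have hgc : Continuous fun x : E2' => ⟪ξ, x⟫ ^ k * f x :=
    ((continuous_const.inner continuous_id).pow k).mul hf
  have hgs : HasCompactSupport fun x : E2' => ⟪ξ, x⟫ ^ k * f x := by
    apply hsupp.mul_left
  have hgi : Integrable (fun x : E2' => ⟪ξ, x⟫ ^ k * f x) volume :=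
    hgc.integrable_of_hasCompactSupport hgs
  have hinner : ∀ (s t : ℝ), ⟪ξ, s • ξ + t • η⟫ = s := by
    intro s t
    rw [inner_add_right, real_inner_smul_right, real_inner_smul_right,
      real_inner_self_eq_norm_sq, hξ, hξη]
    ring
  calc ∫ x : E2', ⟪ξ, x⟫ ^ k * f x
      = ∫ p : ℝ × ℝ, ⟪ξ, Φ2 p⟫ ^ k * f (Φ2 p) :=
        (hmp2.integral_comp Φ2.measurableEmbedding _).symm
    _ = ∫ p : ℝ × ℝ, ⟪ξ, p.1 • ξ + p.2 • η⟫ ^ k * f (p.1 • ξ + p.2 • η) := by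
        refine integral_congr_ae (Filter.Eventually.of_forall fun p => ?_)
        simp only [happ2 p]
    _ = ∫ s : ℝ, ∫ t : ℝ, ⟪ξ, s • ξ + t • η⟫ ^ k * f (s • ξ + t • η) := by
        have hI : Integrable (fun p : ℝ × ℝ => ⟪ξ, p.1 • ξ + p.2 • η⟫ ^ k * f (p.1 • ξ + p.2 • η))
            (volume.prod volume) := by
          rw [← Measure.volume_eq_prod]
          exact ((hmp2.integrable_comp_emb Φ2.measurableEmbedding).mpr hgi).congr
            (Filter.Eventually.of_forall fun p => by
              simp only [Function.comp_apply, happ2 p])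
        rw [Measure.volume_eq_prod]
        exact integral_prod _ hI
    _ = ∫ s : ℝ, s ^ k * radonTransform f s ξ := by
        refine integral_congr_ae (Filter.Eventually.of_forall fun s => ?_)
        simp only [hinner]
        rw [integral_const_mul, hradon s]
    _ = 0 := by simp [h]

private lemma moment_expand' (f : E2' → ℝ) (hf : Continuous f) (hsupp : HasCompactSupport f)
    (k : ℕ) (ξ : E2') :
    ∫ x : E2', ⟪ξ, x⟫ ^ k * f x
      = ∑ j ∈ Finset.range (k + 1), (k.choose j : ℝ) * ξ 0 ^ j * ξ 1 ^ (k - j) *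
          ∫ x : E2', x 0 ^ j * x 1 ^ (k - j) * f x := by
  have hinner : ∀ x : E2', ⟪ξ, x⟫ = ξ 0 * x 0 + ξ 1 * x 1 := by
    intro x
    simp [PiLp.inner_apply, Fin.sum_univ_two, RCLike.inner_apply, mul_comm]
  have hint : ∀ (a b : ℕ), Integrable (fun x : E2' => x 0 ^ a * x 1 ^ b * f x) volume := by
    intro a b
    have hc : Continuous fun x : E2' => x 0 ^ a * x 1 ^ b * f x := by
      refine Continuous.mul (Continuous.mul ?_ ?_) hf <;>
        exact (ContinuousLinearMap.continuous (EuclideanSpace.proj _)).pow _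
    exact hc.integrable_of_hasCompactSupport (hsupp.mul_left)
  calc ∫ x : E2', ⟪ξ, x⟫ ^ k * f x
      = ∫ x : E2', ∑ j ∈ Finset.range (k + 1),
          (k.choose j : ℝ) * ξ 0 ^ j * ξ 1 ^ (k - j) * (x 0 ^ j * x 1 ^ (k - j) * f x) := by
        refine integral_congr_ae (Filter.Eventually.of_forall fun x => ?_)
        beta_reduce
        rw [hinner x, add_pow, Finset.sum_mul]
        refine Finset.sum_congr rfl fun j _ => ?_
        ring
    _ = ∑ j ∈ Finset.range (k + 1), ∫ x : E2',
          (k.choose j : ℝ) * ξ 0 ^ j * ξ 1 ^ (k - j) * (x 0 ^ j * x 1 ^ (k - j) * f x) := by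
        refine integral_finset_sum _ fun j _ => ?_
        exact ((hint j (k - j)).const_mul _)
    _ = _ := by
        refine Finset.sum_congr rfl fun j _ => ?_
        rw [integral_const_mul]

private lemma sq_coords' (ξ : E2') (hξ : ‖ξ‖ = 1) : ξ 0 ^ 2 + ξ 1 ^ 2 = 1 := by
  have h := EuclideanSpace.norm_eq ξ
  rw [hξ] at h
  have h2 : Real.sqrt (∑ i, ‖ξ i‖ ^ 2) = 1 := h.symm
  have := Real.sqrt_eq_one.mp h2
  simpa [Fin.sum_univ_two, Real.norm_eq_abs, sq_abs] using this

private lemma trig_poly_zero' (k : ℕ) (c : ℕ → ℝ) (S : Set E2')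
    (hS : S ⊆ sphere (0 : E2') 1) (hSinf : S.Infinite)
    (h0 : ∀ ξ ∈ S, ∑ j ∈ Finset.range (k + 1), c j * ξ 0 ^ j * ξ 1 ^ (k - j) = 0) :
    ∀ ξ : E2', ‖ξ‖ = 1 → ∑ j ∈ Finset.range (k + 1), c j * ξ 0 ^ j * ξ 1 ^ (k - j) = 0 := by
  set Q : Polynomial ℂ := ∑ j ∈ Finset.range (k + 1),
    Polynomial.C ((c j : ℂ) * 2⁻¹ ^ j * (2 * I)⁻¹ ^ (k - j)) * (X ^ 2 + 1) ^ j *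
      (X ^ 2 - 1) ^ (k - j) with hQ
  have heval : ∀ ξ : E2', ‖ξ‖ = 1 →
      Q.eval ((ξ 0 : ℂ) + ξ 1 * I) = ((ξ 0 : ℂ) + ξ 1 * I) ^ k *
        ((∑ j ∈ Finset.range (k + 1), c j * ξ 0 ^ j * ξ 1 ^ (k - j) : ℝ) : ℂ) := by
    intro ξ hξ
    set a : ℝ := ξ 0
    set b : ℝ := ξ 1
    set z : ℂ := (a : ℂ) + b * I with hzdef
    have hab : a ^ 2 + b ^ 2 = 1 := sq_coords' ξ hξ
    have hmul : z * ((a : ℂ) - b * I) = 1 := by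
      have : ((a : ℂ) + b * I) * ((a : ℂ) - b * I) = (a : ℂ) ^ 2 + (b : ℂ) ^ 2 := by
        ring_nf
        rw [I_sq]
        ring
      rw [hzdef, this]
      exact_mod_cast hab
    have hz1 : z ^ 2 + 1 = z * (2 * a) := by
      rw [← hmul, hzdef]; ring
    have hz2 : z ^ 2 - 1 = z * (2 * I * b) := by
      rw [← hmul, hzdef]; ring
    rw [hQ, Polynomial.eval_finset_sum]
    push_cast
    rw [Finset.mul_sum]
    refine Finset.sum_congr rfl fun j hj => ?_
    have hjk : j + (k - j) = k := Nat.add_sub_cancel' (Nat.lt_succ_iff.mp (Finset.mem_range.mp hj))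
    simp only [eval_mul, eval_pow, eval_add, eval_sub, eval_one, eval_C, eval_X]
    rw [hz1, hz2, mul_pow z (2 * (a:ℂ)), mul_pow z (2 * I * (b:ℂ))]
    have h2 : ((2 : ℂ)⁻¹) ^ j * (2 * (a:ℂ)) ^ j = (a:ℂ) ^ j := by
      rw [mul_pow, ← mul_assoc, ← mul_pow]
      norm_num
    have h3 : ((2 * I : ℂ)⁻¹) ^ (k - j) * (2 * I * (b:ℂ)) ^ (k - j) = (b:ℂ) ^ (k - j) := by
      rw [mul_pow (2 * I) ((b:ℂ)), ← mul_assoc, ← mul_pow]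
      rw [inv_mul_cancel₀ (by simp [I_ne_zero] : (2 * I : ℂ) ≠ 0)]
      simp
    calc (c j : ℂ) * 2⁻¹ ^ j * (2 * I)⁻¹ ^ (k - j) * (z ^ j * (2 * (a:ℂ)) ^ j) *
          (z ^ (k - j) * (2 * I * (b:ℂ)) ^ (k - j))
        = (c j : ℂ) * (2⁻¹ ^ j * (2 * (a:ℂ)) ^ j) * ((2 * I)⁻¹ ^ (k - j) *
            (2 * I * (b:ℂ)) ^ (k - j)) * (z ^ j * z ^ (k - j)) := by ring
      _ = z ^ k * ((c j : ℂ) * (a:ℂ) ^ j * (b:ℂ) ^ (k - j)) := by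
          rw [h2, h3, ← pow_add, hjk]; ring
  -- infinitely many roots
  have hroots : {z : ℂ | Q.IsRoot z}.Infinite := by
    have hinj : Set.InjOn (fun ξ : E2' => (ξ 0 : ℂ) + ξ 1 * I) S := by
      intro x hx y hy hxy
      simp only at hxy
      have h0' : x 0 = y 0 := by
        have := congrArg Complex.re hxy; simpa using this
      have h1' : x 1 = y 1 := by
        have := congrArg Complex.im hxy; simpa using this
      ext i
      fin_cases i <;> assumption
    refine ((hSinf.image hinj).mono ?_)
    rintro z ⟨ξ, hξS, rfl⟩
    have hξ1 : ‖ξ‖ = 1 := by simpa [mem_sphere_zero_iff_norm] using hS hξS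
    show Q.IsRoot _
    unfold Polynomial.IsRoot
    rw [heval ξ hξ1, h0 ξ hξS]
    simp
  have hQ0 : Q = 0 := Polynomial.eq_zero_of_infinite_isRoot Q hroots
  intro ξ hξ1
  have hz0 : ((ξ 0 : ℂ) + ξ 1 * I) ≠ 0 := by
    intro hc
    have := sq_coords' ξ hξ1
    have h0r : ξ 0 = 0 := by have := congrArg Complex.re hc; simpa using this
    have h1r : ξ 1 = 0 := by have := congrArg Complex.im hc; simpa using this
    rw [h0r, h1r] at this
    norm_num at this
  have := heval ξ hξ1
  rw [hQ0] at this
  simp only [Polynomial.eval_zero] at this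
  have := (mul_eq_zero.mp this.symm).resolve_left (pow_ne_zero _ hz0)
  exact_mod_cast this

private lemma coeff_zero_of_unit' (k : ℕ) (c : ℕ → ℝ)
    (hunit : ∀ ξ : E2', ‖ξ‖ = 1 →
      ∑ j ∈ Finset.range (k + 1), c j * ξ 0 ^ j * ξ 1 ^ (k - j) = 0) :
    ∀ j ≤ k, c j = 0 := by
  have hall : ∀ t : ℝ, ∑ j ∈ Finset.range (k + 1), c j * t ^ j = 0 := by
    intro t
    set r : ℝ := Real.sqrt (t ^ 2 + 1) with hrdef
    have hr2 : r ^ 2 = t ^ 2 + 1 := Real.sq_sqrt (by positivity)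
    have hrpos : 0 < r := Real.sqrt_pos.mpr (by positivity)
    set ξ : E2' := (WithLp.equiv 2 (Fin 2 → ℝ)).symm ![t / r, 1 / r] with hξdef
    have hξ0 : ξ 0 = t / r := rfl
    have hξ1 : ξ 1 = 1 / r := rfl
    have hnorm : ‖ξ‖ = 1 := by
      rw [EuclideanSpace.norm_eq]
      have : ∑ i, ‖ξ i‖ ^ 2 = (t / r) ^ 2 + (1 / r) ^ 2 := by
        simp [Fin.sum_univ_two, hξ0, hξ1, Real.norm_eq_abs, sq_abs]
      rw [this]
      have : (t / r) ^ 2 + (1 / r) ^ 2 = 1 := by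
        field_simp
        linarith [hr2]
      rw [this, Real.sqrt_one]
    have h := hunit ξ hnorm
    have hterm : ∀ j ∈ Finset.range (k + 1),
        c j * ξ 0 ^ j * ξ 1 ^ (k - j) = c j * t ^ j * (r ^ k)⁻¹ := by
      intro j hj
      have hjk : j + (k - j) = k := Nat.add_sub_cancel' (Nat.lt_succ_iff.mp (Finset.mem_range.mp hj))
      rw [hξ0, hξ1, div_pow, div_pow, one_pow]
      rw [div_eq_mul_inv, div_eq_mul_inv, ← hjk, pow_add]
      field_simp
      rw [Nat.add_sub_cancel_left]
    rw [Finset.sum_congr rfl hterm, ← Finset.sum_mul] at h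
    have := mul_eq_zero.mp h
    rcases this with h1 | h2
    · exact h1
    · exact absurd h2 (inv_ne_zero (pow_ne_zero _ hrpos.ne'))
  set q : Polynomial ℝ := ∑ j ∈ Finset.range (k + 1), Polynomial.C (c j) * X ^ j with hq
  have hq0 : q = 0 := by
    apply Polynomial.funext
    intro t
    rw [hq]
    simp only [Polynomial.eval_finset_sum, eval_mul, eval_pow, eval_C, eval_X, eval_zero]
    exact hall t
  intro j hj
  have := congrArg (fun p => Polynomial.coeff p j) hq0
  simp only [hq, Polynomial.finset_sum_coeff, Polynomial.coeff_C_mul, Polynomial.coeff_X_pow,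
    Polynomial.coeff_zero, mul_ite, mul_one, mul_zero] at this
  rwa [Finset.sum_ite_eq (Finset.range (k + 1)) j (fun i => c i),
    if_pos (Finset.mem_range.mpr (Nat.lt_succ_of_le hj))] at this

private lemma zero_of_moments' (f : E2' → ℝ) (hf : Continuous f) (hsupp : HasCompactSupport f)
    (hm : ∀ a b : ℕ, ∫ x : E2', x 0 ^ a * x 1 ^ b * f x = 0) : ∀ x, f x = 0 := by
  obtain ⟨R, hR⟩ := (isBounded_iff_subset_closedBall (0 : E2')).mp hsupp.isBounded
  set B : Set E2' := closedBall 0 R with hB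
  have hcpt : IsCompact B := isCompact_closedBall 0 R
  have : CompactSpace B := isCompact_iff_compactSpace.mp hcpt
  -- coordinate functions on B
  let c : Fin 2 → C(B, ℝ) := fun i =>
    ⟨fun x => (x : E2') i, (EuclideanSpace.proj i).continuous.comp continuous_subtype_val⟩
  let Φ : MvPolynomial (Fin 2) ℝ →ₐ[ℝ] C(B, ℝ) := MvPolynomial.aeval c
  let A : Subalgebra ℝ C(B, ℝ) := Φ.range
  have hsep : A.SeparatesPoints := by
    intro x y hxy
    have hxy' : (x : E2') ≠ (y : E2') := fun hc => hxy (Subtype.ext hc)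
    have : ∃ i, (x : E2') i ≠ (y : E2') i := by
      by_contra hc
      push_neg at hc
      exact hxy' (PiLp.ext hc)
    obtain ⟨i, hi⟩ := this
    have hmem : c i ∈ A := ⟨MvPolynomial.X i, MvPolynomial.aeval_X c i⟩
    exact ⟨⇑(c i), ⟨c i, hmem, rfl⟩, hi⟩
  -- polynomial evaluation on all of E2'
  set G : MvPolynomial (Fin 2) ℝ → E2' → ℝ :=
    fun p x => MvPolynomial.eval (fun i => x i) p with hG
  have hGcont : ∀ p, Continuous (G p) := by
    intro p
    exact (MvPolynomial.continuous_eval p).comp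
      (continuous_pi fun i => (EuclideanSpace.proj i).continuous)
  have hGint : ∀ p, Integrable (fun x => G p x * f x) volume := fun p =>
    ((hGcont p).mul hf).integrable_of_hasCompactSupport hsupp.mul_left
  have hGB : ∀ (p) (x : B), (Φ p) x = G p x := by
    intro p x
    have := congrArg (fun ψ => ψ p)
      (MvPolynomial.comp_aeval (φ := ContinuousMap.evalAlgHom ℝ ℝ x) (f := c))
    exact this
  have hkey : ∀ p, ∫ x : E2', G p x * f x = 0 := by
    intro p
    induction p using MvPolynomial.induction_on' with
    | monomial u a =>
      have hrw : (fun x : E2' => G (MvPolynomial.monomial u a) x * f x)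
          = fun x : E2' => a * (x 0 ^ u 0 * x 1 ^ u 1 * f x) := by
        funext x
        simp [hG, MvPolynomial.eval_monomial, Fin.prod_univ_two]
        ring
      rw [hrw, integral_const_mul, hm (u 0) (u 1), mul_zero]
    | add p q hp hq =>
      have hrw : (fun x : E2' => G (p + q) x * f x)
          = fun x : E2' => G p x * f x + G q x * f x := by
        funext x
        simp [hG]
        ring
      rw [hrw, integral_add (hGint p) (hGint q), hp, hq, add_zero]
  -- approximation
  have happrox : ∀ ε : ℝ, 0 < ε → |∫ x : E2', f x ^ 2| ≤ ε * ∫ x : E2', |f x| := by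
    intro ε hε
    obtain ⟨g, hg⟩ := ContinuousMap.exists_mem_subalgebra_near_continuous_of_separatesPoints
      A hsep (fun x : B => f x) (hf.comp continuous_subtype_val) ε hε
    obtain ⟨p, hp⟩ := g.2
    have hfsub : ∀ x : E2', x ∉ B → f x = 0 := by
      intro x hx
      exact image_eq_zero_of_notMem_tsupport (fun hc => hx (hR hc))
    have hptwise : ∀ x : E2', |(f x - G p x) * f x| ≤ ε * |f x| := by
      intro x
      by_cases hx : x ∈ B
      · have h1 : G p x = (g : C(B, ℝ)) ⟨x, hx⟩ := by rw [← hp]; exact (hGB p ⟨x, hx⟩).symm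
        have h2 := hg ⟨x, hx⟩
        rw [abs_mul]
        apply mul_le_mul_of_nonneg_right _ (abs_nonneg _)
        rw [h1]
        have : |f x - (g : C(B,ℝ)) ⟨x, hx⟩| = ‖(g : C(B,ℝ)) ⟨x, hx⟩ - (fun x : B => f x) ⟨x, hx⟩‖ := by
          rw [Real.norm_eq_abs, abs_sub_comm]
        rw [this]
        exact le_of_lt h2
      · rw [hfsub x hx]
        simp
    have hint1 : Integrable (fun x : E2' => (f x - G p x) * f x) volume :=
      (((hf.sub (hGcont p)).mul hf)).integrable_of_hasCompactSupport hsupp.mul_left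
    have hint2 : Integrable (fun x : E2' => |f x|) volume :=
      (hf.abs.integrable_of_hasCompactSupport hsupp.abs)
    have hsplit : ∫ x : E2', f x ^ 2 = ∫ x : E2', (f x - G p x) * f x := by
      have : (fun x : E2' => f x ^ 2) = fun x => (f x - G p x) * f x + G p x * f x := by
        funext x; ring
      rw [this, integral_add hint1 (hGint p), hkey p, add_zero]
    rw [hsplit]
    calc |∫ x : E2', (f x - G p x) * f x| ≤ ∫ x : E2', |(f x - G p x) * f x| :=
          by simpa [Real.norm_eq_abs, abs_mul] using
            norm_integral_le_integral_norm (fun x : E2' => (f x - G p x) * f x) (μ := volume)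
      _ ≤ ∫ x : E2', ε * |f x| := by
            refine integral_mono hint1.abs (hint2.const_mul ε) fun x => ?_
            simpa [abs_mul] using hptwise x
      _ = ε * ∫ x : E2', |f x| := integral_const_mul ε _
  -- conclude integral of square is zero
  have hsq_int : Integrable (fun x : E2' => f x ^ 2) volume := by
    have : HasCompactSupport fun x : E2' => f x ^ 2 := by
      have : (fun x : E2' => f x ^ 2) = fun x => f x * f x := by funext x; ring
      rw [this]; exact hsupp.mul_left
    exact (hf.pow 2).integrable_of_hasCompactSupport this
  have hI : ∫ x : E2', f x ^ 2 = 0 := by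
    set I := ∫ x : E2', f x ^ 2 with hIdef
    set M := ∫ x : E2', |f x| with hM
    have hM0 : 0 ≤ M := integral_nonneg fun x => abs_nonneg _
    by_contra hne
    have habs : 0 < |I| := abs_pos.mpr hne
    have hε : 0 < |I| / (2 * (M + 1)) := by positivity
    have := happrox _ hε
    rw [div_mul_eq_mul_div, le_div_iff₀ (by positivity)] at this
    nlinarith [this, habs, hM0]
  have hae : (fun x : E2' => f x ^ 2) =ᵐ[volume] 0 :=
    (integral_eq_zero_iff_of_nonneg (fun x => sq_nonneg (f x)) hsq_int).mp hI
  have heq : (fun x : E2' => f x ^ 2) = 0 :=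
    (Continuous.ae_eq_iff_eq volume (hf.pow 2) continuous_const).mp hae
  intro x
  have := congrFun heq x
  simpa [pow_eq_zero_iff] using this


end Aux

theorem smith_solomon_wagner_uniqueness
    (f : EuclideanSpace ℝ (Fin 2) → ℝ) (hf : Continuous f) (hsupp : HasCompactSupport f)
    (S : Set (EuclideanSpace ℝ (Fin 2))) (hS : S ⊆ sphere (0 : EuclideanSpace ℝ (Fin 2)) 1)
    (hSinf : S.Infinite)
    (h : ∀ X : ℝ, ∀ ξ ∈ S, radonTransform f X ξ = 0) :
    ∀ x : EuclideanSpace ℝ (Fin 2), f x = 0 := by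
  have hm : ∀ a b : ℕ, ∫ x : E2', x 0 ^ a * x 1 ^ b * f x = 0 := by
    intro a b
    set k := a + b with hk
    set m : ℕ → ℝ := fun j => ∫ x : E2', x 0 ^ j * x 1 ^ (k - j) * f x with hmdef
    set c : ℕ → ℝ := fun j => (k.choose j : ℝ) * m j with hcdef
    have h0 : ∀ ξ ∈ S, ∑ j ∈ Finset.range (k + 1), c j * ξ 0 ^ j * ξ 1 ^ (k - j) = 0 := by
      intro ξ hξS
      have hξ1 : ‖ξ‖ = 1 := by simpa [mem_sphere_zero_iff_norm] using hS hξS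
      have hz := moment_eq_zero' f hf hsupp ξ hξ1 (fun X => h X ξ hξS) k
      rw [moment_expand' f hf hsupp k ξ] at hz
      rw [← hz]
      refine Finset.sum_congr rfl fun j hj => ?_
      simp only [hcdef, hmdef]
      ring
    have hunit := trig_poly_zero' k c S hS hSinf h0
    have hcz := coeff_zero_of_unit' k c hunit
    have hma : c a = 0 := hcz a (by omega)
    have hchoose : (k.choose a : ℝ) ≠ 0 := by
      have : 0 < k.choose a := Nat.choose_pos (by omega)
      positivity
    have : m a = 0 := by
      rcases mul_eq_zero.mp hma with h1 | h2
      · exact absurd h1 hchoose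
      · exact h2
    have hab : k - a = b := by omega
    rw [hmdef] at this
    simpa [hab] using this
  exact zero_of_moments' f hf hsupp hm
end
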